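/- arXiv:2501.13873 — 2 statements merged into one kernel-verified Lean document; each statement's English description precedes it below -/
import Mathlib

section
/- Let P = {x ∈ ℝ² : Ax ≤ b} be a convex polygon with nonempty interior, where every row A_i of A ∈ ℝ^{m×2} has unit norm and every row defines an edge of P, let r = I(P), and for i ∈ [m] let M_i = max { t ≥ 0 : ∃ x with Ax ≤ b − t·(1,…,1) and A_i·x = b_i − t }. Then for every t with 0 ≤ t < r there exists i ∈ [m] such that M_i ≥ t and width(interior_t(P)) = width_{A_i}(interior_t(P)). -/
open Metric Set
open scoped RealInnerProductSpace

/-- The directional width of a set `K` in direction `v`. -/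
noncomputable def dirWidth (v : EuclideanSpace ℝ (Fin 2))
    (K : Set (EuclideanSpace ℝ (Fin 2))) : ℝ :=
  sSup ((fun x => ⟪v, x⟫) '' K) - sInf ((fun x => ⟪v, x⟫) '' K)

/-- The width of `K`: the minimum directional width over all unit directions. -/
noncomputable def setWidth (K : Set (EuclideanSpace ℝ (Fin 2))) : ℝ :=
  sInf {w | ∃ v : EuclideanSpace ℝ (Fin 2), ‖v‖ = 1 ∧ w = dirWidth v K}

/-- The inner parallel body of `P` at distance `t`. -/
def innerParallel (P : Set (EuclideanSpace ℝ (Fin 2))) (t : ℝ) :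
    Set (EuclideanSpace ℝ (Fin 2)) :=
  {x ∈ P | closedBall x t ⊆ P}

/-- The inradius of `P`. -/
noncomputable def inradius (P : Set (EuclideanSpace ℝ (Fin 2))) : ℝ :=
  sSup {r : ℝ | ∃ x, closedBall x r ⊆ P}

lemma aux_orth {e u a : EuclideanSpace ℝ (Fin 2)} (he : e ≠ 0)
    (hu : ‖u‖ = 1) (ha : ‖a‖ = 1) (h1 : ⟪u, e⟫ = 0) (h2 : ⟪a, e⟫ = 0)
    (h3 : 0 < ⟪a, u⟫) : u = a := by
  by_cases hli : LinearIndependent ℝ ![u, a]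
  · exfalso
    have hsp : Submodule.span ℝ (Set.range ![u, a]) = ⊤ :=
      hli.span_eq_top_of_card_eq_finrank (by simp [finrank_euclideanSpace_fin])
    have hmem : e ∈ Submodule.span ℝ (Set.range ![u, a]) := by
      rw [hsp]; trivial
    rw [show Set.range ![u, a] = {u, a} by
      simp [Matrix.range_cons, Matrix.range_empty]; exact Set.pair_comm a u] at hmem
    obtain ⟨s, t, hst⟩ := Submodule.mem_span_pair.mp hmem
    have : ⟪e, e⟫ = 0 := by
      have h1' : ⟪e, u⟫ = 0 := by rw [real_inner_comm]; exact h1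
      have h2' : ⟪e, a⟫ = 0 := by rw [real_inner_comm]; exact h2
      nth_rewrite 2 [← hst]
      rw [inner_add_right, real_inner_smul_right, real_inner_smul_right, h1', h2']
      ring
    exact he (inner_self_eq_zero.mp this)
  · rw [LinearIndependent.pair_iff] at hli
    push_neg at hli
    obtain ⟨s, t, hst, hne⟩ := hli
    have hs : s ≠ 0 := by
      rintro rfl
      have ht : t ≠ 0 := by tauto
      have ha0 : a = 0 := by
        have h0 : t • a = 0 := by simpa using hst
        rcases smul_eq_zero.mp h0 with h | h
        · exact absurd h ht
        · exact h
      rw [ha0] at ha; simp at ha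
    have hh : s • u = (-t) • a := by linear_combination (norm := module) hst
    have hua : u = (-t / s) • a := by
      have h4 := congrArg (fun z => s⁻¹ • z) hh
      simp only [smul_smul] at h4
      rw [inv_mul_cancel₀ hs, one_smul] at h4
      rw [h4]; congr 1; field_simp
    have hct : |(-t / s)| = 1 := by
      have := congrArg norm hua
      rw [norm_smul, ha, hu, Real.norm_eq_abs] at this
      simpa using this.symm
    have hpos : 0 < (-t / s) := by
      have hh2 : ⟪a, u⟫ = (-t / s) * ⟪a, a⟫ := by rw [hua, real_inner_smul_right]
      have haa : ⟪a, a⟫ = 1 := by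
        rw [real_inner_self_eq_norm_sq, ha]; norm_num
      nlinarith [h3, hh2, haa]
    have h1' : (-t / s) = 1 := by
      rcases abs_cases (-t / s) with ⟨h, _⟩ | ⟨h, _⟩ <;> linarith
    rw [hua, h1', one_smul]
lemma edge_row {m : ℕ} (A : Fin m → EuclideanSpace ℝ (Fin 2)) (c : Fin m → ℝ)
    (hA : ∀ i, ‖A i‖ = 1) (u : EuclideanSpace ℝ (Fin 2)) (hu : ‖u‖ = 1)
    (p p' : EuclideanSpace ℝ (Fin 2)) (hp : ∀ j, ⟪A j, p⟫ ≤ c j)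
    (hp' : ∀ j, ⟪A j, p'⟫ ≤ c j)
    (hne : p ≠ p') (heq : ⟪u, p⟫ = ⟪u, p'⟫)
    (hmax : ∀ x, (∀ j, ⟪A j, x⟫ ≤ c j) → ⟪u, x⟫ ≤ ⟪u, p⟫) :
    ∃ j, A j = u ∧ ∃ z, (∀ k, ⟪A k, z⟫ ≤ c k) ∧ ⟪A j, z⟫ = c j := by
  classical
  obtain ⟨z, hz, hzu, hjp0⟩ :
      ∃ z, (∀ j, ⟪A j, z⟫ ≤ c j) ∧ ⟪u, z⟫ = ⟪u, p⟫ ∧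
        ∀ j, ⟪A j, z⟫ = c j → (⟪A j, p⟫ = c j ∧ ⟪A j, p'⟫ = c j) := by
    refine ⟨(2:ℝ)⁻¹ • (p + p'), ?_, ?_, ?_⟩
    · intro j
      rw [real_inner_smul_right, inner_add_right]
      linarith [hp j, hp' j]
    · rw [real_inner_smul_right, inner_add_right, ← heq]; ring
    · intro j hj
      rw [real_inner_smul_right, inner_add_right] at hj
      constructor <;> nlinarith [hp j, hp' j]
  have hm : Nonempty (Fin m) := by
    by_contra hmn
    rw [not_nonempty_iff] at hmn
    have := hmax (p + u) (fun j => hmn.elim j)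
    rw [inner_add_right, real_inner_self_eq_norm_sq, hu] at this
    norm_num at this
  by_cases hj : ∃ j, ⟪A j, z⟫ = c j ∧ 0 < ⟪A j, u⟫
  · obtain ⟨j, hjz, hju⟩ := hj
    obtain ⟨hjp1, hjp2⟩ := hjp0 j hjz
    have he : p - p' ≠ 0 := sub_ne_zero.mpr hne
    have h1 : ⟪u, p - p'⟫ = 0 := by rw [inner_sub_right, heq]; ring
    have h2 : ⟪A j, p - p'⟫ = 0 := by rw [inner_sub_right, hjp1, hjp2]; ring
    exact ⟨j, (aux_orth he hu (hA j) h1 h2 hju).symm, z, hz, hjz⟩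
  · exfalso
    push_neg at hj
    set ε : ℝ := Finset.univ.inf' (Finset.univ_nonempty) fun j =>
      if ⟪A j, z⟫ < c j then c j - ⟪A j, z⟫ else 1 with hεdef
    have hε : 0 < ε := by
      rw [hεdef, Finset.lt_inf'_iff]
      intro j _
      split_ifs with h
      · linarith
      · norm_num
    have hxK : ∀ j, ⟪A j, z + ε • u⟫ ≤ c j := by
      intro j
      have hexp : ⟪A j, z + ε • u⟫ = ⟪A j, z⟫ + ε * ⟪A j, u⟫ := by
        rw [inner_add_right, real_inner_smul_right]
      rcases lt_or_eq_of_le (hz j) with h | h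
      · have h5 : ε ≤ c j - ⟪A j, z⟫ := by
          rw [hεdef]
          refine le_trans (Finset.inf'_le _ (Finset.mem_univ j)) ?_
          rw [if_pos h]
        have h6 : ⟪A j, u⟫ ≤ 1 := by
          calc ⟪A j, u⟫ ≤ ‖A j‖ * ‖u‖ := real_inner_le_norm _ _
          _ = 1 := by rw [hA j, hu]; ring
        nlinarith
      · have h7 : ⟪A j, u⟫ ≤ 0 := hj j h
        nlinarith
    have hfin := hmax _ hxK
    have hexp : ⟪u, z + ε • u⟫ = ⟪u, z⟫ + ε * ⟪u, u⟫ := by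
      rw [inner_add_right, real_inner_smul_right]
    have huu : ⟪u, u⟫ = 1 := by rw [real_inner_self_eq_norm_sq, hu]; norm_num
    rw [hexp, huu, hzu] at hfin
    nlinarith
lemma cone_sep {m : ℕ} (A : Fin m → EuclideanSpace ℝ (Fin 2)) (c : Fin m → ℝ)
    (hA : ∀ i, ‖A i‖ = 1) (v p q : EuclideanSpace ℝ (Fin 2)) (hv : ‖v‖ = 1)
    (hp : ∀ j, ⟪A j, p⟫ ≤ c j) (hq : ∀ j, ⟪A j, q⟫ ≤ c j) (hlt : ⟪v, q⟫ < ⟪v, p⟫)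
    (hmax : ∀ x, (∀ j, ⟪A j, x⟫ ≤ c j) → ⟪v, x⟫ ≤ ⟪v, p⟫)
    (hsing : ∀ x, (∀ j, ⟪A j, x⟫ ≤ c j) → ⟪v, x⟫ = ⟪v, p⟫ → x = p) :
    ∃ ε > 0, ∀ x, (∀ j, ⟪A j, x⟫ ≤ c j) → ⟪v, x - p⟫ ≤ -ε * ‖x - p‖ := by
  classical
  have hm : Nonempty (Fin m) := by
    by_contra hmn
    rw [not_nonempty_iff] at hmn
    have := hmax (p + v) (fun j => hmn.elim j)
    rw [inner_add_right, real_inner_self_eq_norm_sq, hv] at this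
    norm_num at this
  set C : Set (EuclideanSpace ℝ (Fin 2)) :=
    {d | ∀ j, ⟪A j, p⟫ = c j → ⟪A j, d⟫ ≤ 0} with hCdef
  -- every nonzero direction in C sees v negatively
  have claim1 : ∀ d ∈ C, d ≠ 0 → ⟪v, d⟫ < 0 := by
    intro d hd hd0
    have hdn : (0:ℝ) < ‖d‖ := norm_pos_iff.mpr hd0
    set s : ℝ := Finset.univ.inf' (Finset.univ_nonempty) fun j =>
      if ⟪A j, p⟫ < c j then (c j - ⟪A j, p⟫) / ‖d‖ else 1 with hsdef
    have hs : 0 < s := by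
      rw [hsdef, Finset.lt_inf'_iff]
      intro j _
      split_ifs with h
      · exact div_pos (by linarith) hdn
      · norm_num
    have hxK : ∀ j, ⟪A j, p + s • d⟫ ≤ c j := by
      intro j
      have hexp : ⟪A j, p + s • d⟫ = ⟪A j, p⟫ + s * ⟪A j, d⟫ := by
        rw [inner_add_right, real_inner_smul_right]
      rcases lt_or_eq_of_le (hp j) with h | h
      · have h5 : s ≤ (c j - ⟪A j, p⟫) / ‖d‖ := by
          rw [hsdef]
          refine le_trans (Finset.inf'_le _ (Finset.mem_univ j)) ?_
          rw [if_pos h]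
        have h6 : ⟪A j, d⟫ ≤ ‖d‖ := by
          calc ⟪A j, d⟫ ≤ ‖A j‖ * ‖d‖ := real_inner_le_norm _ _
          _ = ‖d‖ := by rw [hA j]; ring
        have h7 : s * ⟪A j, d⟫ ≤ s * ‖d‖ := by nlinarith
        have h8 : s * ‖d‖ ≤ c j - ⟪A j, p⟫ := by
          rw [le_div_iff₀ hdn] at h5
          linarith
        linarith [hexp.le]
      · have h7 : ⟪A j, d⟫ ≤ 0 := hd j h
        nlinarith [hexp.le]
    have hne : p + s • d ≠ p := by
      intro hcon
      have : s • d = 0 := by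
        have := congrArg (fun y => y - p) hcon
        simpa using this
      rcases smul_eq_zero.mp this with h | h
      · exact absurd h (ne_of_gt hs)
      · exact hd0 h
    have hle := hmax _ hxK
    have hltx : ⟪v, p + s • d⟫ < ⟪v, p⟫ := by
      rcases lt_or_eq_of_le hle with h | h
      · exact h
      · exact absurd (hsing _ hxK h) hne
    rw [inner_add_right, real_inner_smul_right] at hltx
    nlinarith
  -- C is closed
  have hC : IsClosed C := by
    rw [hCdef]
    have : {d : EuclideanSpace ℝ (Fin 2) | ∀ j, ⟪A j, p⟫ = c j → ⟪A j, d⟫ ≤ 0} =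
        ⋂ j, {d | ⟪A j, p⟫ = c j → ⟪A j, d⟫ ≤ 0} := by
      ext d; simp
    rw [this]
    refine isClosed_iInter fun j => ?_
    by_cases h : ⟪A j, p⟫ = c j
    · simp only [h, forall_const]
      exact isClosed_le (Continuous.inner continuous_const continuous_id) continuous_const
    · have : {d : EuclideanSpace ℝ (Fin 2) | ⟪A j, p⟫ = c j → ⟪A j, d⟫ ≤ 0} = Set.univ :=
        Set.eq_univ_of_forall (fun d hcon => absurd hcon h)
      rw [this]; exact isClosed_univ
  -- the compact set of unit directions in C
  have hqp : q - p ∈ C := by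
    intro j hj
    rw [inner_sub_right, hj]
    linarith [hq j]
  have hqp0 : q - p ≠ 0 := sub_ne_zero.mpr (by intro h; rw [h] at hlt; exact lt_irrefl _ hlt)
  have hDne : (C ∩ sphere 0 1).Nonempty := by
    refine ⟨‖q - p‖⁻¹ • (q - p), ?_, ?_⟩
    · intro j hj
      rw [real_inner_smul_right]
      have := hqp j hj
      have : (0:ℝ) ≤ ‖q - p‖⁻¹ := by positivity
      nlinarith [hqp j hj]
    · rw [mem_sphere_zero_iff_norm, norm_smul, norm_inv, norm_norm]
      exact inv_mul_cancel₀ (ne_of_gt (norm_pos_iff.mpr hqp0))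
  have hDcomp : IsCompact (C ∩ sphere 0 1) :=
    (isCompact_sphere (0 : EuclideanSpace ℝ (Fin 2)) 1).inter_left hC
  have hcont : Continuous fun d : EuclideanSpace ℝ (Fin 2) => ⟪v, d⟫ :=
    Continuous.inner continuous_const continuous_id
  obtain ⟨d₀, hd₀D, hd₀max⟩ := hDcomp.exists_isMaxOn hDne hcont.continuousOn
  have hd₀ : ⟪v, d₀⟫ < 0 := by
    refine claim1 d₀ hd₀D.1 ?_
    have := hd₀D.2
    rw [mem_sphere_zero_iff_norm] at this
    intro h; rw [h] at this; simp at this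
  refine ⟨-⟪v, d₀⟫, by linarith, ?_⟩
  intro x hx
  rcases eq_or_ne x p with rfl | hxp
  · simp
  · have hd : x - p ∈ C := by
      intro j hj
      rw [inner_sub_right, hj]
      linarith [hx j]
    have hdn : (0:ℝ) < ‖x - p‖ := by
      rw [norm_pos_iff]; exact sub_ne_zero.mpr hxp
    have hmem : ‖x - p‖⁻¹ • (x - p) ∈ C ∩ sphere 0 1 := by
      constructor
      · intro j hj
        rw [real_inner_smul_right]
        have h1 := hd j hj
        have h2 : (0:ℝ) ≤ ‖x - p‖⁻¹ := by positivity
        nlinarith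
      · rw [mem_sphere_zero_iff_norm, norm_smul, norm_inv, norm_norm]
        exact inv_mul_cancel₀ (ne_of_gt hdn)
    have := hd₀max hmem
    simp only [Set.mem_setOf_eq] at this
    rw [real_inner_smul_right] at this
    -- this : ‖x-p‖⁻¹ * ⟪v, x-p⟫ ≤ ⟪v, d₀⟫
    have h9 : ⟪v, x - p⟫ ≤ ⟪v, d₀⟫ * ‖x - p‖ := by
      have h10 := mul_le_mul_of_nonneg_left this (le_of_lt hdn)
      rw [← mul_assoc, mul_inv_cancel₀ (ne_of_gt hdn), one_mul] at h10
      linarith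
    nlinarith
lemma sSup_neg_image {α : Type*} (f : α → ℝ) (K : Set α) :
    sSup ((fun x => -f x) '' K) = -sInf (f '' K) := by
  have h : ((fun x => -f x) '' K) = -(f '' K) := by
    ext y
    simp only [Set.mem_image, Set.mem_neg]
    constructor
    · rintro ⟨x, hx, rfl⟩; exact ⟨x, hx, by ring⟩
    · rintro ⟨x, hx, hxy⟩; exact ⟨x, hx, by linarith⟩
  rw [h, Real.sInf_def, neg_neg]

lemma dirWidth_neg (v : EuclideanSpace ℝ (Fin 2)) (K : Set (EuclideanSpace ℝ (Fin 2))) :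
    dirWidth (-v) K = dirWidth v K := by
  unfold dirWidth
  have hfun : (fun x : EuclideanSpace ℝ (Fin 2) => ⟪-v, x⟫) =
      fun x => -⟪v, x⟫ := by
    funext x; rw [inner_neg_left]
  rw [hfun, sSup_neg_image]
  have h2 : sInf ((fun x : EuclideanSpace ℝ (Fin 2) => -⟪v, x⟫) '' K) =
      -sSup ((fun x : EuclideanSpace ℝ (Fin 2) => ⟪v, x⟫) '' K) := by
    have := sSup_neg_image (fun x : EuclideanSpace ℝ (Fin 2) => -⟪v, x⟫) K
    simp only [neg_neg] at this
    linarith [this]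
  rw [h2]
  ring

lemma exists_min_dir (K : Set (EuclideanSpace ℝ (Fin 2))) (hne : K.Nonempty)
    (hb : Bornology.IsBounded K) :
    ∃ v, ‖v‖ = 1 ∧
      IsLeast {w | ∃ u : EuclideanSpace ℝ (Fin 2), ‖u‖ = 1 ∧ w = dirWidth u K}
        (dirWidth v K) := by
  obtain ⟨C, hC⟩ := isBounded_iff_forall_norm_le.mp hb
  set R : ℝ := max C 0 with hRdef
  have hR0 : 0 ≤ R := le_max_right _ _
  have hRb : ∀ x ∈ K, ‖x‖ ≤ R := fun x hx => le_trans (hC x hx) (le_max_left _ _)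
  set S : EuclideanSpace ℝ (Fin 2) → ℝ := fun v => sSup ((fun x => ⟪v, x⟫) '' K)
    with hSdef
  have hbdd : ∀ v : EuclideanSpace ℝ (Fin 2),
      BddAbove ((fun x => ⟪v, x⟫) '' K) := by
    intro v
    refine ⟨‖v‖ * R, ?_⟩
    rintro y ⟨x, hx, rfl⟩
    calc ⟪v, x⟫ ≤ ‖v‖ * ‖x‖ := real_inner_le_norm _ _
    _ ≤ ‖v‖ * R := by
        have := hRb x hx
        nlinarith [norm_nonneg v]
  have hkey : ∀ v w : EuclideanSpace ℝ (Fin 2), S v ≤ S w + R * ‖v - w‖ := by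
    intro v w
    refine csSup_le (hne.image _) ?_
    · rintro y ⟨x, hx, rfl⟩
      have h1 : ⟪v, x⟫ = ⟪w, x⟫ + ⟪v - w, x⟫ := by
        rw [inner_sub_left]; ring
      have h2 : ⟪w, x⟫ ≤ S w := le_csSup (hbdd w) ⟨x, hx, rfl⟩
      have h3 : ⟪v - w, x⟫ ≤ ‖v - w‖ * ‖x‖ := real_inner_le_norm _ _
      have h4 : ‖v - w‖ * ‖x‖ ≤ ‖v - w‖ * R := by
        have := hRb x hx
        nlinarith [norm_nonneg (v - w)]
      nlinarith
  have hlip : Continuous S := by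
    have : LipschitzWith R.toNNReal S := by
      refine LipschitzWith.of_dist_le_mul ?_
      intro v w
      rw [Real.dist_eq, Real.coe_toNNReal R hR0, dist_eq_norm]
      rw [abs_sub_le_iff]
      constructor
      · have := hkey v w; linarith
      · have := hkey w v
        rw [show ‖w - v‖ = ‖v - w‖ from norm_sub_rev w v] at this
        linarith
    exact this.continuous
  have hdw : ∀ v, dirWidth v K = S v + S (-v) := by
    intro v
    unfold dirWidth
    have hfun : (fun x : EuclideanSpace ℝ (Fin 2) => ⟪-v, x⟫) =
        fun x => -⟪v, x⟫ := by funext x; rw [inner_neg_left]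
    have h2 : S (-v) = -sInf ((fun x : EuclideanSpace ℝ (Fin 2) => ⟪v, x⟫) '' K) := by
      rw [hSdef]
      simp only
      rw [hfun, sSup_neg_image]
    rw [h2]
    simp only [hSdef]
    ring
  have hg : Continuous fun v : EuclideanSpace ℝ (Fin 2) => dirWidth v K := by
    have : (fun v : EuclideanSpace ℝ (Fin 2) => dirWidth v K) =
        fun v => S v + S (-v) := funext hdw
    rw [this]
    exact hlip.add (hlip.comp continuous_neg)
  have hsph : IsCompact (sphere (0 : EuclideanSpace ℝ (Fin 2)) 1) := isCompact_sphere _ _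
  have hsphne : (sphere (0 : EuclideanSpace ℝ (Fin 2)) 1).Nonempty :=
    NormedSpace.sphere_nonempty.mpr zero_le_one
  obtain ⟨v, hvmem, hvmin⟩ := hsph.exists_isMinOn hsphne hg.continuousOn
  rw [mem_sphere_zero_iff_norm] at hvmem
  refine ⟨v, hvmem, ⟨⟨v, hvmem, rfl⟩, ?_⟩⟩
  rintro w ⟨u, hu, rfl⟩
  exact hvmin (mem_sphere_zero_iff_norm.mpr hu)
set_option maxHeartbeats 1000000 in
/-- For a convex polygon `P = {x : Ax ≤ b} ⊆ ℝ²` with nonempty interior, unit-norm rows and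
every row defining an edge, with `r = I(P)` and
`M_i = max {t ≥ 0 : ∃ x, Ax ≤ b − t·𝟙 and A_i·x = b_i − t}`: for every `0 ≤ t < r` there is
an index `i` with `M_i ≥ t` such that the width of `interior_t P` is attained in the
direction `A_i`. -/
theorem width_attained_at_active_row {m : ℕ}
    (A : Fin m → EuclideanSpace ℝ (Fin 2)) (b : Fin m → ℝ)
    (hA : ∀ i, ‖A i‖ = 1)
    (hbdd : Bornology.IsBounded {x | ∀ i, ⟪A i, x⟫ ≤ b i})
    (hint : (interior {x | ∀ i, ⟪A i, x⟫ ≤ b i}).Nonempty)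
    (hedge : ∀ i, Module.finrank ℝ
      (vectorSpan ℝ {x ∈ {x | ∀ j, ⟪A j, x⟫ ≤ b j} | ⟪A i, x⟫ = b i}) = 1)
    (M : Fin m → ℝ)
    (hM : ∀ i, IsGreatest
      {t : ℝ | 0 ≤ t ∧ ∃ x, (∀ j, ⟪A j, x⟫ ≤ b j - t) ∧ ⟪A i, x⟫ = b i - t} (M i)) :
    ∀ t : ℝ, 0 ≤ t → t < inradius {x | ∀ j, ⟪A j, x⟫ ≤ b j} →
      ∃ i : Fin m, t ≤ M i ∧
        setWidth (innerParallel {x | ∀ j, ⟪A j, x⟫ ≤ b j} t) =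
          dirWidth (A i) (innerParallel {x | ∀ j, ⟪A j, x⟫ ≤ b j} t) := by
  intro t ht htr
  classical
  set P : Set (EuclideanSpace ℝ (Fin 2)) := {x | ∀ j, ⟪A j, x⟫ ≤ b j} with hPdef
  set c : Fin m → ℝ := fun j => b j - t with hcdef
  set K : Set (EuclideanSpace ℝ (Fin 2)) := {x | ∀ j, ⟪A j, x⟫ ≤ c j} with hKdef
  -- innerParallel P t = K
  have hIP : innerParallel P t = K := by
    ext x
    constructor
    · rintro ⟨hxP, hball⟩ j
      have hmem : x + t • A j ∈ closedBall x t := by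
        rw [mem_closedBall, dist_eq_norm, add_sub_cancel_left, norm_smul, hA j,
          Real.norm_eq_abs, abs_of_nonneg ht]
        simp
      have := hball hmem j
      rw [inner_add_right, real_inner_smul_right, real_inner_self_eq_norm_sq, hA j] at this
      rw [hcdef]
      simp only
      nlinarith
    · intro hxK
      refine ⟨fun j => by have := hxK j; rw [hcdef] at this; simp only at this; linarith, ?_⟩
      intro y hy j
      rw [mem_closedBall, dist_eq_norm] at hy
      have h1 : ⟪A j, y⟫ = ⟪A j, x⟫ + ⟪A j, y - x⟫ := by
        rw [inner_sub_right]; ring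
      have h2 : ⟪A j, y - x⟫ ≤ ‖A j‖ * ‖y - x‖ := real_inner_le_norm _ _
      have h3 := hxK j
      rw [hcdef] at h3; simp only at h3
      rw [hA j, one_mul] at h2
      linarith
  -- extract a ball of radius > t inside P
  have hS0ne : {r : ℝ | ∃ x, closedBall x r ⊆ P}.Nonempty := by
    refine ⟨-1, 0, ?_⟩
    rw [Metric.closedBall_eq_empty.mpr (by norm_num)]
    exact empty_subset _
  obtain ⟨r', ⟨x₀, hx₀⟩, htr'⟩ := exists_lt_of_lt_csSup hS0ne htr
  have hx₀K : ∀ j, ⟪A j, x₀⟫ ≤ b j - r' := by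
    intro j
    have hmem : x₀ + r' • A j ∈ closedBall x₀ r' := by
      rw [mem_closedBall, dist_eq_norm, add_sub_cancel_left, norm_smul, hA j,
        Real.norm_eq_abs, abs_of_nonneg (by linarith : (0:ℝ) ≤ r')]
      simp
    have := hx₀ hmem j
    rw [inner_add_right, real_inner_smul_right, real_inner_self_eq_norm_sq, hA j] at this
    nlinarith
  set ρ : ℝ := r' - t with hρdef
  have hρ : 0 < ρ := by rw [hρdef]; linarith
  have hballK : ∀ y : EuclideanSpace ℝ (Fin 2), ‖y - x₀‖ ≤ ρ → y ∈ K := by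
    intro y hy j
    have h1 : ⟪A j, y⟫ = ⟪A j, x₀⟫ + ⟪A j, y - x₀⟫ := by rw [inner_sub_right]; ring
    have h2 : ⟪A j, y - x₀⟫ ≤ ‖A j‖ * ‖y - x₀‖ := real_inner_le_norm _ _
    rw [hA j, one_mul] at h2
    have h3 := hx₀K j
    rw [hcdef]
    simp only
    linarith
  have hKne : K.Nonempty := ⟨x₀, hballK x₀ (by simp [le_of_lt hρ])⟩
  have hKP : K ⊆ P := by
    intro x hx j
    have := hx j
    rw [hcdef] at this; simp only at this
    linarith
  have hKb : Bornology.IsBounded K := hbdd.subset hKP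
  have hKcl : IsClosed K := by
    have : K = ⋂ j, {x : EuclideanSpace ℝ (Fin 2) | ⟪A j, x⟫ ≤ c j} := by
      ext x; simp [hKdef]
    rw [this]
    exact isClosed_iInter fun j =>
      isClosed_le (Continuous.inner continuous_const continuous_id) continuous_const
  have hKcomp : IsCompact K := Metric.isCompact_of_isClosed_isBounded hKcl hKb
  -- minimizing direction
  obtain ⟨v, hv1, hleast⟩ := exists_min_dir K hKne hKb
  have hsetw : setWidth K = dirWidth v K := hleast.csInf_eq
  -- extremizers
  have hcontv : Continuous fun x : EuclideanSpace ℝ (Fin 2) => ⟪v, x⟫ :=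
    Continuous.inner continuous_const continuous_id
  obtain ⟨p, hpK, hpmax⟩ := hKcomp.exists_isMaxOn hKne hcontv.continuousOn
  obtain ⟨q, hqK, hqmin⟩ := hKcomp.exists_isMinOn hKne hcontv.continuousOn
  have hpmax' : ∀ x ∈ K, ⟪v, x⟫ ≤ ⟪v, p⟫ := fun x hx => hpmax hx
  have hqmin' : ∀ x ∈ K, ⟪v, q⟫ ≤ ⟪v, x⟫ := fun x hx => hqmin hx
  have hsSup : sSup ((fun x => ⟪v, x⟫) '' K) = ⟪v, p⟫ :=
    IsGreatest.csSup_eq ⟨⟨p, hpK, rfl⟩, by rintro y ⟨x, hx, rfl⟩; exact hpmax' x hx⟩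
  have hsInf : sInf ((fun x => ⟪v, x⟫) '' K) = ⟪v, q⟫ :=
    IsLeast.csInf_eq ⟨⟨q, hqK, rfl⟩, by rintro y ⟨x, hx, rfl⟩; exact hqmin' x hx⟩
  have hw : dirWidth v K = ⟪v, p⟫ - ⟪v, q⟫ := by
    unfold dirWidth; rw [hsSup, hsInf]
  -- positive width
  have hwpos : 2 * ρ ≤ dirWidth v K := by
    have h1 : x₀ + ρ • v ∈ K := hballK _ (by
      rw [add_sub_cancel_left, norm_smul, hv1, Real.norm_eq_abs, abs_of_pos hρ]; simp)
    have h2 : x₀ - ρ • v ∈ K := hballK _ (by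
      rw [sub_sub_cancel_left, norm_neg, norm_smul, hv1, Real.norm_eq_abs, abs_of_pos hρ]
      simp)
    have h3 := hpmax' _ h1
    have h4 := hqmin' _ h2
    rw [inner_add_right, real_inner_smul_right, real_inner_self_eq_norm_sq, hv1] at h3
    rw [inner_sub_right, real_inner_smul_right, real_inner_self_eq_norm_sq, hv1] at h4
    rw [hw]
    nlinarith
  have hpq : ⟪v, q⟫ < ⟪v, p⟫ := by nlinarith
  -- case analysis
  by_cases hA1 : ∃ p', p' ∈ K ∧ p ≠ p' ∧ ⟪v, p⟫ = ⟪v, p'⟫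
  · obtain ⟨p', hp'K, hne, heq⟩ := hA1
    obtain ⟨j, hAj, z, hzK, hzj⟩ := edge_row A c hA v hv1 p p'
      (fun j => hpK j) (fun j => hp'K j) hne heq (fun x hx => hpmax' x hx)
    refine ⟨j, (hM j).2 ⟨ht, z, fun k => hzK k, hzj⟩, ?_⟩
    rw [hIP, hsetw, hAj]
  · by_cases hB1 : ∃ q', q' ∈ K ∧ q ≠ q' ∧ ⟪v, q⟫ = ⟪v, q'⟫
    · obtain ⟨q', hq'K, hne, heq⟩ := hB1
      have heq' : ⟪-v, q⟫ = ⟪-v, q'⟫ := by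
        rw [inner_neg_left, inner_neg_left, heq]
      have hmaxn : ∀ x, (∀ k, ⟪A k, x⟫ ≤ c k) → ⟪-v, x⟫ ≤ ⟪-v, q⟫ := by
        intro x hx
        rw [inner_neg_left, inner_neg_left, neg_le_neg_iff]
        exact hqmin' x hx
      obtain ⟨j, hAj, z, hzK, hzj⟩ := edge_row A c hA (-v) (by rw [norm_neg]; exact hv1)
        q q' (fun k => hqK k) (fun k => hq'K k) hne heq' hmaxn
      refine ⟨j, (hM j).2 ⟨ht, z, fun k => hzK k, hzj⟩, ?_⟩
      rw [hIP, hsetw, hAj, dirWidth_neg]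
    · -- both faces are singletons: contradiction
      exfalso
      push_neg at hA1 hB1
      have hsingp : ∀ x, (∀ k, ⟪A k, x⟫ ≤ c k) → ⟪v, x⟫ = ⟪v, p⟫ → x = p := by
        intro x hx hvx
        by_contra hne
        exact (hA1 x hx (Ne.symm hne)) hvx.symm
      have hsingq : ∀ x, (∀ k, ⟪A k, x⟫ ≤ c k) → ⟪-v, x⟫ = ⟪-v, q⟫ → x = q := by
        intro x hx hvx
        rw [inner_neg_left, inner_neg_left, neg_inj] at hvx
        by_contra hne
        exact (hB1 x hx (Ne.symm hne)) hvx.symm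
      obtain ⟨ε₁, hε₁, hcone₁⟩ := cone_sep A c hA v p q hv1
        (fun k => hpK k) (fun k => hqK k) hpq (fun x hx => hpmax' x hx) hsingp
      obtain ⟨ε₂, hε₂, hcone₂⟩ := cone_sep A c hA (-v) q p (by rw [norm_neg]; exact hv1)
        (fun k => hqK k) (fun k => hpK k)
        (by rw [inner_neg_left, inner_neg_left]; linarith)
        (fun x hx => by
          rw [inner_neg_left, inner_neg_left, neg_le_neg_iff]; exact hqmin' x hx)
        hsingq
      set δ : ℝ := min ε₁ ε₂ with hδdef
      have hδ : 0 < δ := lt_min hε₁ hε₂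
      -- build perpendicular
      set vp : EuclideanSpace ℝ (Fin 2) :=
        (WithLp.equiv 2 (Fin 2 → ℝ)).symm ![-(v 1), v 0] with hvpdef
      have hvv : (v 0)^2 + (v 1)^2 = 1 := by
        have h1 : ⟪v, v⟫ = 1 := by rw [real_inner_self_eq_norm_sq, hv1]; norm_num
        rw [PiLp.inner_apply] at h1
        simp [RCLike.inner_apply, Fin.sum_univ_two] at h1
        nlinarith [h1]
      have hvp0 : vp 0 = -(v 1) := rfl
      have hvp1 : vp 1 = v 0 := rfl
      have hvvp : ⟪v, vp⟫ = 0 := by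
        rw [PiLp.inner_apply]
        simp [RCLike.inner_apply, Fin.sum_univ_two, hvp0, hvp1]
        ring
      have hvpvp : ⟪vp, vp⟫ = 1 := by
        rw [PiLp.inner_apply]
        simp [RCLike.inner_apply, Fin.sum_univ_two, hvp0, hvp1]
        nlinarith [hvv]
      have hvvi : ⟪v, v⟫ = 1 := by rw [real_inner_self_eq_norm_sq, hv1]; norm_num
      set d : EuclideanSpace ℝ (Fin 2) := p - q with hddef
      have hW : 0 < ⟪v, d⟫ := by rw [hddef, inner_sub_right]; linarith
      obtain ⟨σ, hσ2, hσd⟩ : ∃ σ : ℝ, σ^2 = 1 ∧ σ * ⟪vp, d⟫ ≤ 0 := by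
        rcases le_or_gt ⟪vp, d⟫ 0 with h | h
        · exact ⟨1, by norm_num, by nlinarith⟩
        · exact ⟨-1, by norm_num, by nlinarith⟩
      set y : ℝ := max (1 - δ^2/2) (1/2) with hydef
      have hy1 : y < 1 := by
        rw [hydef, max_lt_iff]
        constructor <;> nlinarith
      have hy0 : 0 < y := lt_of_lt_of_le (by norm_num) (le_max_right _ _)
      have hyδ : 1 - δ^2/2 ≤ y := le_max_left _ _
      set s : ℝ := Real.arccos y with hsdef
      have hcos : Real.cos s = y := Real.cos_arccos (by linarith) (by linarith)
      have hsin : 0 < Real.sin s := by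
        rw [hsdef, Real.sin_arccos]
        apply Real.sqrt_pos.mpr
        nlinarith
      set u : EuclideanSpace ℝ (Fin 2) := Real.cos s • v + (σ * Real.sin s) • vp
        with hudef
      have hvpv : ⟪vp, v⟫ = 0 := by rw [real_inner_comm]; exact hvvp
      have hiuv : ⟪u, v⟫ = Real.cos s := by
        rw [hudef, inner_add_left, real_inner_smul_left, real_inner_smul_left,
          hvvi, hvpv]
        ring
      have hiuvp : ⟪u, vp⟫ = σ * Real.sin s := by
        rw [hudef, inner_add_left, real_inner_smul_left, real_inner_smul_left,
          hvvp, hvpvp]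
        ring
      clear_value vp d y s u
      have huu : ⟪u, u⟫ = 1 := by
        nth_rewrite 2 [hudef]
        rw [inner_add_right, real_inner_smul_right, real_inner_smul_right,
          hiuv, hiuvp]
        linear_combination Real.sin_sq_add_cos_sq s + (Real.sin s)^2 * hσ2
      have hu1 : ‖u‖ = 1 := by
        have h1 : ⟪u, u⟫ = ‖u‖^2 := real_inner_self_eq_norm_sq u
        have h2 : ‖u‖^2 = 1 := by rw [← h1]; exact huu
        have h3 : (‖u‖ - 1) * (‖u‖ + 1) = 0 := by nlinarith only [h2]
        rcases mul_eq_zero.mp h3 with h | h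
        · linarith only [h]
        · linarith only [h, norm_nonneg u]
      have huv : ‖u - v‖ ≤ δ := by
        have h1 : ⟪u - v, u - v⟫ = ‖u - v‖^2 := real_inner_self_eq_norm_sq _
        have h2 : ⟪u - v, u - v⟫ = 2 - 2 * Real.cos s := by
          rw [inner_sub_left, inner_sub_right, inner_sub_right, huu,
            real_inner_comm u v, hiuv, hvvi]
          ring
        have h3 : ‖u - v‖^2 ≤ δ^2 := by
          rw [← h1, h2, hcos]
          linarith only [hyδ]
        by_contra hcon
        push_neg at hcon
        nlinarith only [h3, hcon, norm_nonneg (u - v), hδ]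
      have hud : ⟪u, d⟫ < ⟪v, d⟫ := by
        have h1 : ⟪u, d⟫ = Real.cos s * ⟪v, d⟫ + σ * Real.sin s * ⟪vp, d⟫ := by
          rw [hudef, inner_add_left, real_inner_smul_left, real_inner_smul_left]
        have h2 : σ * Real.sin s * ⟪vp, d⟫ ≤ 0 := by nlinarith only [hσd, hsin]
        nlinarith only [h1, h2, hcos, hy1, hW]
      -- p is still the max for u, q still min
      have hmaxu : ∀ x ∈ K, ⟪u, x⟫ ≤ ⟪u, p⟫ := by
        intro x hx
        have h1 := hcone₁ x (fun k => hx k)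
        have h2 : ⟪u - v, x - p⟫ ≤ ‖u - v‖ * ‖x - p‖ := real_inner_le_norm _ _
        have h3 : ‖u - v‖ * ‖x - p‖ ≤ δ * ‖x - p‖ := by
          nlinarith only [huv, norm_nonneg (x - p)]
        have h4 : δ ≤ ε₁ := min_le_left _ _
        have h5 : ⟪u, x - p⟫ = ⟪v, x - p⟫ + ⟪u - v, x - p⟫ := by
          rw [inner_sub_left]; ring
        have h6 : ⟪u, x - p⟫ ≤ 0 := by
          have h7 : δ * ‖x - p‖ ≤ ε₁ * ‖x - p‖ := by
            nlinarith only [h4, norm_nonneg (x - p)]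
          linarith only [h1, h2, h3, h5, h7]
        rw [inner_sub_right] at h6
        linarith
      have hminu : ∀ x ∈ K, ⟪u, q⟫ ≤ ⟪u, x⟫ := by
        intro x hx
        have h1 := hcone₂ x (fun k => hx k)
        have h2 : ⟪-(u - v), x - q⟫ ≤ ‖u - v‖ * ‖x - q‖ := by
          have := real_inner_le_norm (-(u - v)) (x - q)
          rwa [norm_neg] at this
        have h4 : δ ≤ ε₂ := min_le_right _ _
        have h5 : ⟪-u, x - q⟫ = ⟪-v, x - q⟫ + ⟪-(u - v), x - q⟫ := by
          rw [inner_neg_left, inner_neg_left, inner_neg_left, inner_sub_left]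
          ring
        have h6 : ⟪-u, x - q⟫ ≤ 0 := by
          have h3 : ‖u - v‖ * ‖x - q‖ ≤ δ * ‖x - q‖ := by
            nlinarith only [huv, norm_nonneg (x - q)]
          have h7 : δ * ‖x - q‖ ≤ ε₂ * ‖x - q‖ := by
            nlinarith only [h4, norm_nonneg (x - q)]
          linarith only [h1, h2, h3, h5, h7]
        rw [inner_neg_left, inner_sub_right] at h6
        linarith
      have hsSupu : sSup ((fun x => ⟪u, x⟫) '' K) = ⟪u, p⟫ :=
        IsGreatest.csSup_eq ⟨⟨p, hpK, rfl⟩, by rintro w ⟨x, hx, rfl⟩; exact hmaxu x hx⟩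
      have hsInfu : sInf ((fun x => ⟪u, x⟫) '' K) = ⟪u, q⟫ :=
        IsLeast.csInf_eq ⟨⟨q, hqK, rfl⟩, by rintro w ⟨x, hx, rfl⟩; exact hminu x hx⟩
      have hwu : dirWidth u K = ⟪u, d⟫ := by
        unfold dirWidth
        rw [hsSupu, hsInfu, hddef, inner_sub_right]
      have hmin := hleast.2 ⟨u, hu1, rfl⟩
      have hwv : dirWidth v K = ⟪v, d⟫ := by
        rw [hw, hddef, inner_sub_right]
      rw [hwu] at hmin
      rw [hwv] at hmin
      linarith only [hmin, hud]
end

section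
/- Let P = {x ∈ ℝ² : Ax ≤ b} be a convex polygon with nonempty interior where every row A_i of A ∈ ℝ^{m×2} has unit norm and every row defines an edge of P, let n ≥ 2, r = I(P), f_i(t) = width_{A_i}(interior_t(P)) − 2(n−1)t, M_i = max { t ≥ 0 : ∃ x with Ax ≤ b − t·(1,…,1) and A_i·x = b_i − t }, and let ρ ∈ (0,r) be the unique number with width(P^ρ) = 2nρ. Then ρ = min { t ∈ (0,r) : ∃ i ∈ [m] with f_i(t) = 0 and f_i(min(M_i, r)) ≤ 0 }. -/
open Metric Set
open scoped RealInnerProductSpace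

/-- The `t`-rounded body `P^t`: the union of all closed `t`-balls contained in `P`. -/
def rounded (P : Set (EuclideanSpace ℝ (Fin 2))) (t : ℝ) :
    Set (EuclideanSpace ℝ (Fin 2)) :=
  {y | ∃ x, closedBall x t ⊆ P ∧ y ∈ closedBall x t}

namespace RhoAux

abbrev E2 := EuclideanSpace ℝ (Fin 2)

lemma inner_coords (x y : E2) : ⟪x, y⟫ = x 0 * y 0 + x 1 * y 1 := by
  simp [PiLp.inner_apply, RCLike.inner_apply, Fin.sum_univ_two, mul_comm]

lemma im_bddAbove (v : E2) {K : Set E2} {R : ℝ} (hR : ∀ x ∈ K, ‖x‖ ≤ R) :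
    BddAbove ((fun x => ⟪v, x⟫) '' K) := by
  refine ⟨‖v‖ * R, ?_⟩
  rintro w ⟨x, hx, rfl⟩
  calc ⟪v, x⟫ ≤ |⟪v, x⟫| := le_abs_self _
    _ ≤ ‖v‖ * ‖x‖ := abs_real_inner_le_norm v x
    _ ≤ ‖v‖ * R := by have := hR x hx; nlinarith [norm_nonneg v, norm_nonneg x]

lemma im_bddBelow (v : E2) {K : Set E2} {R : ℝ} (hR : ∀ x ∈ K, ‖x‖ ≤ R) :
    BddBelow ((fun x => ⟪v, x⟫) '' K) := by
  refine ⟨-(‖v‖ * R), ?_⟩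
  rintro w ⟨x, hx, rfl⟩
  have h1 : |⟪v, x⟫| ≤ ‖v‖ * ‖x‖ := abs_real_inner_le_norm v x
  have h2 : ‖v‖ * ‖x‖ ≤ ‖v‖ * R := by have := hR x hx; nlinarith [norm_nonneg v, norm_nonneg x]
  have h3 := neg_abs_le (⟪v, x⟫ : ℝ)
  show -(‖v‖ * R) ≤ ⟪v, x⟫
  linarith

lemma dirWidth_nonneg (v : E2) {K : Set E2} {R : ℝ} (hne : K.Nonempty)
    (hR : ∀ x ∈ K, ‖x‖ ≤ R) : 0 ≤ dirWidth v K := by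
  obtain ⟨x, hx⟩ := hne
  have h1 : sInf ((fun x => ⟪v, x⟫) '' K) ≤ ⟪v, x⟫ :=
    csInf_le (im_bddBelow v hR) (mem_image_of_mem _ hx)
  have h2 : ⟪v, x⟫ ≤ sSup ((fun x => ⟪v, x⟫) '' K) :=
    le_csSup (im_bddAbove v hR) (mem_image_of_mem _ hx)
  unfold dirWidth; linarith

lemma dirWidth_mono (v : E2) {K₁ K₂ : Set E2} {R : ℝ} (hsub : K₁ ⊆ K₂)
    (hne : K₁.Nonempty) (hR : ∀ x ∈ K₂, ‖x‖ ≤ R) :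
    dirWidth v K₁ ≤ dirWidth v K₂ := by
  have h1 : sSup ((fun x => ⟪v, x⟫) '' K₁) ≤ sSup ((fun x => ⟪v, x⟫) '' K₂) :=
    csSup_le_csSup (im_bddAbove v hR) (hne.image _) (image_mono hsub)
  have h2 : sInf ((fun x => ⟪v, x⟫) '' K₂) ≤ sInf ((fun x => ⟪v, x⟫) '' K₁) :=
    csInf_le_csInf (im_bddBelow v hR) (hne.image _) (image_mono hsub)
  unfold dirWidth; linarith

lemma im_neg (v : E2) (K : Set E2) :
    ((fun x => ⟪-v, x⟫) '' K) = -((fun x => ⟪v, x⟫) '' K) := by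
  ext w
  simp only [Set.mem_neg, Set.mem_image]
  constructor
  · rintro ⟨x, hx, rfl⟩; exact ⟨x, hx, by rw [inner_neg_left]; ring⟩
  · rintro ⟨x, hx, h⟩; exact ⟨x, hx, by rw [inner_neg_left]; linarith⟩

lemma dirWidth_neg (v : E2) (K : Set E2) : dirWidth (-v) K = dirWidth v K := by
  unfold dirWidth
  rw [im_neg]
  have h1 : sInf (-((fun x => ⟪v, x⟫) '' K)) = -sSup ((fun x => ⟪v, x⟫) '' K) := by
    rw [Real.sInf_def]; simp
  have h2 : sSup (-((fun x => ⟪v, x⟫) '' K)) = -sInf ((fun x => ⟪v, x⟫) '' K) := by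
    rw [Real.sInf_def]; ring
  rw [h1, h2]; ring

lemma dirWidth_eq_pq (v : E2) {K : Set E2} {p q : E2} (hp : p ∈ K) (hq : q ∈ K)
    (hmax : ∀ x ∈ K, ⟪v, x⟫ ≤ ⟪v, p⟫) (hmin : ∀ x ∈ K, ⟪v, q⟫ ≤ ⟪v, x⟫) :
    dirWidth v K = ⟪v, p⟫ - ⟪v, q⟫ := by
  unfold dirWidth
  have h1 : sSup ((fun x => ⟪v, x⟫) '' K) = ⟪v, p⟫ := by
    apply IsGreatest.csSup_eq
    exact ⟨mem_image_of_mem _ hp, by rintro w ⟨x, hx, rfl⟩; exact hmax x hx⟩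
  have h2 : sInf ((fun x => ⟪v, x⟫) '' K) = ⟪v, q⟫ := by
    apply IsLeast.csInf_eq
    exact ⟨mem_image_of_mem _ hq, by rintro w ⟨x, hx, rfl⟩; exact hmin x hx⟩
  rw [h1, h2]

lemma dirWidth_continuous {K : Set E2} {R : ℝ} (hne : K.Nonempty)
    (hR : ∀ x ∈ K, ‖x‖ ≤ R) : Continuous fun v : E2 => dirWidth v K := by
  have hR0 : 0 ≤ R := le_trans (norm_nonneg _) (hR _ hne.choose_spec)
  have hkey : ∀ u w : E2, sSup ((fun x => ⟪u, x⟫) '' K)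
      ≤ sSup ((fun x => ⟪w, x⟫) '' K) + R * ‖u - w‖ := by
    intro u w
    apply csSup_le (hne.image _)
    rintro _ ⟨x, hx, rfl⟩
    have h1 : ⟪u, x⟫ = ⟪w, x⟫ + ⟪u - w, x⟫ := by
      rw [← inner_add_left]
      congr 1
      abel
    have h2 : ⟪u - w, x⟫ ≤ ‖u - w‖ * ‖x‖ := real_inner_le_norm _ _
    have h3 := le_csSup (im_bddAbove w hR) (mem_image_of_mem (fun x => ⟪w, x⟫) hx)
    have h4 : ‖u - w‖ * ‖x‖ ≤ R * ‖u - w‖ := by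
      have := hR x hx; nlinarith [norm_nonneg (u - w), norm_nonneg x]
    show ⟪u, x⟫ ≤ _
    linarith
  have hsup : Continuous fun v : E2 => sSup ((fun x => ⟪v, x⟫) '' K) := by
    apply LipschitzWith.continuous (K := ⟨R, hR0⟩)
    apply LipschitzWith.of_dist_le_mul
    intro u w
    rw [Real.dist_eq, dist_eq_norm, abs_sub_le_iff]
    have hk1 := hkey u w
    have hk2 := hkey w u
    rw [norm_sub_rev w u] at hk2
    constructor
    · change _ ≤ R * ‖u - w‖; linarith
    · change _ ≤ R * ‖u - w‖; linarith
  have hinf : Continuous fun v : E2 => sInf ((fun x => ⟪v, x⟫) '' K) := by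
    have heq : (fun v : E2 => sInf ((fun x => ⟪v, x⟫) '' K))
        = fun v : E2 => -sSup ((fun x => ⟪-v, x⟫) '' K) := by
      funext v
      rw [im_neg, Real.sInf_def]
    rw [heq]
    exact ((hsup.comp continuous_neg)).neg
  exact hsup.sub hinf

lemma exists_pos_le {m : ℕ} (f : Fin m → ℝ) (hf : ∀ j, 0 < f j) :
    ∃ ε, 0 < ε ∧ ∀ j, ε ≤ f j := by
  rcases Nat.eq_zero_or_pos m with hm | hm
  · subst hm; exact ⟨1, one_pos, fun j => j.elim0⟩
  · have hne : (Finset.univ : Finset (Fin m)).Nonempty := ⟨⟨0, hm⟩, Finset.mem_univ _⟩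
    obtain ⟨j₀, -, hj₀⟩ := Finset.exists_min_image Finset.univ f hne
    exact ⟨f j₀, hf j₀, fun j => hj₀ j (Finset.mem_univ _)⟩

/-- In the plane, two unit vectors orthogonal to the same nonzero vector coincide up to sign. -/
lemma unit_orth_eq {v a d : E2} (hd : d ≠ 0) (hv : ‖v‖ = 1) (ha : ‖a‖ = 1)
    (h1 : ⟪v, d⟫ = 0) (h2 : ⟪a, d⟫ = 0) : a = v ∨ a = -v := by
  have hinner := inner_coords
  have hnorm : ∀ x : E2, ‖x‖ = 1 → x 0 ^ 2 + x 1 ^ 2 = 1 := by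
    intro x hx
    have := real_inner_self_eq_norm_sq x
    rw [hx, hinner] at this
    nlinarith
  have hv2 := hnorm v hv
  have ha2 := hnorm a ha
  rw [hinner] at h1 h2
  have hdne : d 0 ≠ 0 ∨ d 1 ≠ 0 := by
    by_contra h
    push_neg at h
    exact hd (by ext i; fin_cases i <;> simp [h.1, h.2])
  have hcross : v 0 * a 1 - v 1 * a 0 = 0 := by
    rcases hdne with h | h
    · have e1 : (v 0 * a 1 - v 1 * a 0) * d 0 = a 1 * (v 0 * d 0 + v 1 * d 1)
          - v 1 * (a 0 * d 0 + a 1 * d 1) := by ring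
      rw [h1, h2] at e1
      simp only [mul_zero, sub_zero] at e1
      exact (mul_eq_zero.1 e1).resolve_right h
    · have e1 : (v 0 * a 1 - v 1 * a 0) * d 1 = v 0 * (a 0 * d 0 + a 1 * d 1)
          - a 0 * (v 0 * d 0 + v 1 * d 1) := by ring
      rw [h1, h2] at e1
      simp only [mul_zero, sub_zero, zero_sub, neg_eq_zero] at e1
      exact (mul_eq_zero.1 e1).resolve_right h
  have ha0 : a 0 = (a 0 * v 0 + a 1 * v 1) * v 0 := by
    linear_combination (-(a 0)) * hv2 - v 1 * hcross
  have ha1 : a 1 = (a 0 * v 0 + a 1 * v 1) * v 1 := by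
    linear_combination (-(a 1)) * hv2 + v 0 * hcross
  have hs2 : (a 0 * v 0 + a 1 * v 1) ^ 2 = 1 := by
    linear_combination (-(a 0)) * ha0 + (-(a 1)) * ha1 + ha2
  have hfac : ((a 0 * v 0 + a 1 * v 1) - 1) * ((a 0 * v 0 + a 1 * v 1) + 1) = 0 := by
    linear_combination hs2
  rcases mul_eq_zero.1 hfac with h | h
  · have hs1 : a 0 * v 0 + a 1 * v 1 = 1 := by linarith
    left; ext i; fin_cases i
    · simp only [Fin.zero_eta]; rw [ha0, hs1, one_mul]
    · simp only [Fin.mk_one]; rw [ha1, hs1, one_mul]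
  · have hs1 : a 0 * v 0 + a 1 * v 1 = -1 := by linarith
    right; ext i; fin_cases i
    · simp only [Fin.zero_eta, PiLp.neg_apply]; rw [ha0, hs1]; ring
    · simp only [Fin.mk_one, PiLp.neg_apply]; rw [ha1, hs1]; ring

variable {m : ℕ} {A : Fin m → E2} {c : Fin m → ℝ}

/-- At a maximizer of a linear functional over the polygon, some constraint is active. -/
lemma active_of_max (hA : ∀ i, ‖A i‖ = 1) {w z : E2} (hw : ‖w‖ = 1)
    (hz : z ∈ {x : E2 | ∀ j, ⟪A j, x⟫ ≤ c j})
    (hmax : ∀ x ∈ {x : E2 | ∀ j, ⟪A j, x⟫ ≤ c j}, ⟪w, x⟫ ≤ ⟪w, z⟫) :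
    ∃ j, ⟪A j, z⟫ = c j := by
  by_contra h
  push_neg at h
  obtain ⟨ε, hε, hεle⟩ := exists_pos_le (fun j => c j - ⟪A j, z⟫)
    (fun j => sub_pos.2 (lt_of_le_of_ne (hz j) (h j)))
  have hmem : z + ε • w ∈ {x : E2 | ∀ j, ⟪A j, x⟫ ≤ c j} := by
    intro j
    have h2 : ⟪A j, w⟫ ≤ 1 := by
      have := real_inner_le_norm (A j) w
      rw [hA j, hw] at this; linarith
    have h3 : ⟪A j, z + ε • w⟫ = ⟪A j, z⟫ + ε * ⟪A j, w⟫ := by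
      rw [inner_add_right, real_inner_smul_right]
    have h4 : ε * ⟪A j, w⟫ ≤ ε := by nlinarith
    have := hεle j
    show ⟪A j, z + ε • w⟫ ≤ c j
    rw [h3]; linarith
  have := hmax _ hmem
  rw [inner_add_right, real_inner_smul_right, real_inner_self_eq_norm_sq, hw] at this
  simp only [one_pow, mul_one] at this
  linarith

/-- Sharpness at a unique maximizer of a polygon. -/
lemma sharp (hA : ∀ i, ‖A i‖ = 1)
    {v p : E2} (hp : p ∈ {x : E2 | ∀ j, ⟪A j, x⟫ ≤ c j})
    (hmax : ∀ x ∈ {x : E2 | ∀ j, ⟪A j, x⟫ ≤ c j}, ⟪v, x⟫ ≤ ⟪v, p⟫)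
    (huniq : ∀ x ∈ {x : E2 | ∀ j, ⟪A j, x⟫ ≤ c j}, ⟪v, x⟫ = ⟪v, p⟫ → x = p)
    {x₁ : E2} (hx₁ : x₁ ∈ {x : E2 | ∀ j, ⟪A j, x⟫ ≤ c j}) (hx₁p : x₁ ≠ p) :
    ∃ cc > 0, ∀ x ∈ {x : E2 | ∀ j, ⟪A j, x⟫ ≤ c j}, ⟪v, x⟫ ≤ ⟪v, p⟫ - cc * ‖x - p‖ := by
  classical
  set K : Set E2 := {x : E2 | ∀ j, ⟪A j, x⟫ ≤ c j} with hK
  set C : Set E2 := {u : E2 | ‖u‖ = 1 ∧ ∀ j, ⟪A j, p⟫ = c j → ⟪A j, u⟫ ≤ 0} with hC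
  have hCclosed : IsClosed C := by
    have h1 : C = {u : E2 | ‖u‖ = 1} ∩ ⋂ j, {u : E2 | ⟪A j, p⟫ = c j → ⟪A j, u⟫ ≤ 0} := by
      ext u; simp [hC, Set.mem_iInter]
    rw [h1]
    refine IsClosed.inter (isClosed_eq continuous_norm continuous_const)
      (isClosed_iInter fun j => ?_)
    by_cases hj : ⟪A j, p⟫ = c j
    · have : {u : E2 | ⟪A j, p⟫ = c j → ⟪A j, u⟫ ≤ 0} = {u : E2 | ⟪A j, u⟫ ≤ 0} := by
        ext u; simp [hj]
      rw [this]
      exact isClosed_le (Continuous.inner continuous_const continuous_id) continuous_const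
    · have : {u : E2 | ⟪A j, p⟫ = c j → ⟪A j, u⟫ ≤ 0} = Set.univ := by
        ext u
        simp only [Set.mem_setOf_eq, Set.mem_univ, iff_true]
        intro h; exact absurd h hj
      rw [this]; exact isClosed_univ
  have hCcompact : IsCompact C := by
    apply isCompact_of_isClosed_isBounded hCclosed
    apply (Metric.isBounded_closedBall (x := (0 : E2)) (r := 1)).subset
    intro u hu
    rw [Metric.mem_closedBall, dist_zero_right, hu.1]
  have hdir : ∀ x ∈ K, x ≠ p → (‖x - p‖⁻¹ • (x - p)) ∈ C := by
    intro x hx hxp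
    have hnx : ‖x - p‖ ≠ 0 := by
      simp only [ne_eq, norm_eq_zero, sub_eq_zero]; exact hxp
    have hnxpos : 0 < ‖x - p‖ := lt_of_le_of_ne (norm_nonneg _) (Ne.symm hnx)
    constructor
    · rw [norm_smul, norm_inv, norm_norm, inv_mul_cancel₀ hnx]
    · intro j hj
      have h1 : ⟪A j, x - p⟫ ≤ 0 := by
        rw [inner_sub_right, hj]; have := hx j; linarith
      rw [real_inner_smul_right]
      have : (0:ℝ) ≤ ‖x - p‖⁻¹ := by positivity
      nlinarith
  have hCne : C.Nonempty := ⟨_, hdir x₁ hx₁ hx₁p⟩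
  have hneg : ∀ u ∈ C, ⟪v, u⟫ < 0 := by
    rintro u ⟨hu1, hu2⟩
    obtain ⟨ε, hε, hεle⟩ := exists_pos_le
      (fun j => if h : ⟪A j, p⟫ = c j then 1 else c j - ⟪A j, p⟫)
      (fun j => by
        by_cases h : ⟪A j, p⟫ = c j
        · simp [h]
        · simp only [h, dif_neg, not_false_iff]
          exact sub_pos.2 (lt_of_le_of_ne (hp j) h))
    have hmem : p + ε • u ∈ K := by
      intro j
      have h3 : ⟪A j, p + ε • u⟫ = ⟪A j, p⟫ + ε * ⟪A j, u⟫ := by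
        rw [inner_add_right, real_inner_smul_right]
      by_cases h : ⟪A j, p⟫ = c j
      · have := hu2 j h
        show ⟪A j, p + ε • u⟫ ≤ c j
        rw [h3, h]; nlinarith
      · have h4 : ε ≤ c j - ⟪A j, p⟫ := by
          have := hεle j; simp only [h, dif_neg, not_false_iff] at this; simpa using this
        have h5 : ⟪A j, u⟫ ≤ 1 := by
          have := real_inner_le_norm (A j) u
          rw [hA j, hu1] at this; linarith
        show ⟪A j, p + ε • u⟫ ≤ c j
        rw [h3]; nlinarith
    have h6 := hmax _ hmem
    rw [inner_add_right, real_inner_smul_right] at h6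
    have h7 : ⟪v, u⟫ ≤ 0 := by nlinarith
    rcases lt_or_eq_of_le h7 with h | h
    · exact h
    · exfalso
      have h8 : ⟪v, p + ε • u⟫ = ⟪v, p⟫ := by
        rw [inner_add_right, real_inner_smul_right, h]; ring
      have h9 := huniq _ hmem h8
      have h10 : ε • u = 0 := by
        have := sub_eq_zero.2 h9; rwa [add_sub_cancel_left] at this
      rw [smul_eq_zero] at h10
      rcases h10 with h | h
      · exact absurd h (ne_of_gt hε)
      · rw [h, norm_zero] at hu1; norm_num at hu1
  obtain ⟨u₀, hu₀C, hu₀max⟩ := hCcompact.exists_isMaxOn hCne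
    ((continuous_const.inner continuous_id : Continuous fun u : E2 => ⟪v, u⟫).continuousOn)
  refine ⟨-⟪v, u₀⟫, by linarith [hneg u₀ hu₀C], ?_⟩
  intro x hx
  by_cases hxp : x = p
  · subst hxp; simp
  · have hu := hdir x hx hxp
    have h1 : ⟪v, ‖x - p‖⁻¹ • (x - p)⟫ ≤ ⟪v, u₀⟫ := hu₀max hu
    rw [real_inner_smul_right] at h1
    have hnx : ‖x - p‖ ≠ 0 := by
      simp only [ne_eq, norm_eq_zero, sub_eq_zero]; exact hxp
    have hnxpos : 0 < ‖x - p‖ := lt_of_le_of_ne (norm_nonneg _) (Ne.symm hnx)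
    have h2 : ⟪v, x - p⟫ ≤ ‖x - p‖ * ⟪v, u₀⟫ := by
      rw [inv_mul_le_iff₀ hnxpos] at h1
      linarith [h1]
    rw [inner_sub_right] at h2
    nlinarith

/-- If the support line at a maximizing direction contains two points of `K`,
then some constraint normal to that direction is active. -/
lemma edge_normal (hA : ∀ i, ‖A i‖ = 1) {w z₁ z₂ : E2} (hw : ‖w‖ = 1)
    (hz₁ : z₁ ∈ {x : E2 | ∀ j, ⟪A j, x⟫ ≤ c j}) (hz₂ : z₂ ∈ {x : E2 | ∀ j, ⟪A j, x⟫ ≤ c j})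
    (hne : z₂ ≠ z₁)
    (hmax : ∀ x ∈ {x : E2 | ∀ j, ⟪A j, x⟫ ≤ c j}, ⟪w, x⟫ ≤ ⟪w, z₁⟫)
    (heq : ⟪w, z₂⟫ = ⟪w, z₁⟫) :
    ∃ j z, z ∈ {x : E2 | ∀ j, ⟪A j, x⟫ ≤ c j} ∧ ⟪A j, z⟫ = c j ∧ (A j = w ∨ A j = -w) := by
  set z : E2 := (1/2 : ℝ) • z₁ + (1/2 : ℝ) • z₂ with hzdef
  have hzsplit : ∀ u : E2, ⟪u, z⟫ = (1/2) * ⟪u, z₁⟫ + (1/2) * ⟪u, z₂⟫ := by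
    intro u
    rw [hzdef, inner_add_right, real_inner_smul_right, real_inner_smul_right]
  have hzK : z ∈ {x : E2 | ∀ j, ⟪A j, x⟫ ≤ c j} := by
    intro j
    have h1 := hz₁ j; have h2 := hz₂ j
    show ⟪A j, z⟫ ≤ c j
    rw [hzsplit]; linarith
  have hzmax : ∀ x ∈ {x : E2 | ∀ j, ⟪A j, x⟫ ≤ c j}, ⟪w, x⟫ ≤ ⟪w, z⟫ := by
    intro x hx
    have := hmax x hx
    rw [hzsplit, heq]; linarith
  obtain ⟨j, hj⟩ := active_of_max hA hw hzK hzmax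
  have hd : z₂ - z₁ ≠ 0 := sub_ne_zero.2 hne
  have h2a : ⟪A j, z⟫ + (1/2) * ⟪A j, z₂ - z₁⟫ = ⟪A j, z₂⟫ := by
    rw [hzsplit, inner_sub_right]; ring
  have h2b : ⟪A j, z⟫ - (1/2) * ⟪A j, z₂ - z₁⟫ = ⟪A j, z₁⟫ := by
    rw [hzsplit, inner_sub_right]; ring
  have hAd : ⟪A j, z₂ - z₁⟫ = 0 := by
    have e1 := hz₂ j
    have e2 := hz₁ j
    rw [← h2a, hj] at e1
    rw [← h2b, hj] at e2
    linarith
  have hwd : ⟪w, z₂ - z₁⟫ = 0 := by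
    rw [inner_sub_right, heq]; ring
  rcases unit_orth_eq hd hw (hA j) hwd hAd with h | h
  · exact ⟨j, z, hzK, hj, Or.inl h⟩
  · exact ⟨j, z, hzK, hj, Or.inr h⟩

set_option maxHeartbeats 2000000 in
/-- Key geometric lemma: the width of a polygon is attained in the direction of one of the
active constraint normals. -/
lemma keyWidth (hA : ∀ i, ‖A i‖ = 1) {R : ℝ}
    (hR : ∀ x ∈ {x : E2 | ∀ j, ⟪A j, x⟫ ≤ c j}, ‖x‖ ≤ R)
    {x₀ : E2} {ε : ℝ} (hε : 0 < ε)
    (hball : closedBall x₀ ε ⊆ {x : E2 | ∀ j, ⟪A j, x⟫ ≤ c j}) :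
    ∃ i, ∃ z ∈ {x : E2 | ∀ j, ⟪A j, x⟫ ≤ c j}, ⟪A i, z⟫ = c i ∧
      ∀ v : E2, ‖v‖ = 1 → dirWidth (A i) {x : E2 | ∀ j, ⟪A j, x⟫ ≤ c j}
        ≤ dirWidth v {x : E2 | ∀ j, ⟪A j, x⟫ ≤ c j} := by
  classical
  set K : Set E2 := {x : E2 | ∀ j, ⟪A j, x⟫ ≤ c j} with hKdef
  have hx₀K : x₀ ∈ K := hball (mem_closedBall_self hε.le)
  have hKne : K.Nonempty := ⟨x₀, hx₀K⟩
  have hKclosed : IsClosed K := by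
    have : K = ⋂ j, {x : E2 | ⟪A j, x⟫ ≤ c j} := by
      ext x; simp [hKdef, Set.mem_iInter]
    rw [this]
    exact isClosed_iInter fun j =>
      isClosed_le (continuous_const.inner continuous_id) continuous_const
  have hKcompact : IsCompact K := by
    apply isCompact_of_isClosed_isBounded hKclosed
    apply (Metric.isBounded_closedBall (x := (0 : E2)) (r := R)).subset
    intro x hx
    rw [Metric.mem_closedBall, dist_zero_right]
    exact hR x hx
  have hcont := dirWidth_continuous hKne hR
  have hsne : (sphere (0:E2) 1).Nonempty := NormedSpace.sphere_nonempty.2 zero_le_one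
  obtain ⟨v, hvs, hvmin'⟩ := (isCompact_sphere (0:E2) 1).exists_isMinOn hsne hcont.continuousOn
  have hv : ‖v‖ = 1 := by rwa [mem_sphere_zero_iff_norm] at hvs
  have hmin : ∀ u : E2, ‖u‖ = 1 → dirWidth v K ≤ dirWidth u K := by
    intro u hu
    exact isMinOn_iff.mp hvmin' u (mem_sphere_zero_iff_norm.2 hu)
  obtain ⟨p, hpK, hpmax'⟩ := hKcompact.exists_isMaxOn hKne
    ((continuous_const.inner continuous_id : Continuous fun x : E2 => ⟪v, x⟫).continuousOn)
  have hpmax : ∀ x ∈ K, ⟪v, x⟫ ≤ ⟪v, p⟫ := fun x hx => isMaxOn_iff.mp hpmax' x hx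
  obtain ⟨q, hqK, hqmax'⟩ := hKcompact.exists_isMaxOn hKne
    ((continuous_const.inner continuous_id : Continuous fun x : E2 => ⟪-v, x⟫).continuousOn)
  have hqmax : ∀ x ∈ K, ⟪-v, x⟫ ≤ ⟪-v, q⟫ := fun x hx => isMaxOn_iff.mp hqmax' x hx
  have hqmin : ∀ x ∈ K, ⟪v, q⟫ ≤ ⟪v, x⟫ := by
    intro x hx
    have := hqmax x hx
    rw [inner_neg_left, inner_neg_left] at this
    linarith
  have hnv : ‖-v‖ = 1 := by rw [norm_neg]; exact hv
  by_cases hcase : (∃ y ∈ K, y ≠ p ∧ ⟪v, y⟫ = ⟪v, p⟫) ∨ (∃ y ∈ K, y ≠ q ∧ ⟪v, y⟫ = ⟪v, q⟫)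
  · rcases hcase with ⟨y, hyK, hyp, hy⟩ | ⟨y, hyK, hyq, hy⟩
    · obtain ⟨j, z, hzK, hact, hjw⟩ := edge_normal hA hv hpK hyK hyp hpmax hy
      refine ⟨j, z, hzK, hact, fun u hu => ?_⟩
      have hdj : dirWidth (A j) K = dirWidth v K := by
        rcases hjw with h | h
        · rw [h]
        · rw [h, dirWidth_neg]
      rw [hdj]; exact hmin u hu
    · have hy' : ⟪-v, y⟫ = ⟪-v, q⟫ := by rw [inner_neg_left, inner_neg_left, hy]
      obtain ⟨j, z, hzK, hact, hjw⟩ := edge_normal hA hnv hqK hyK hyq hqmax hy'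
      refine ⟨j, z, hzK, hact, fun u hu => ?_⟩
      have hdj : dirWidth (A j) K = dirWidth v K := by
        rcases hjw with h | h
        · rw [h, dirWidth_neg]
        · rw [h, neg_neg]
      rw [hdj]; exact hmin u hu
  · exfalso
    push_neg at hcase
    obtain ⟨hup, huq⟩ := hcase
    have huniqp : ∀ x ∈ K, ⟪v, x⟫ = ⟪v, p⟫ → x = p := by
      intro x hx h
      by_contra hne
      exact hup x hx hne h
    have huniqq : ∀ x ∈ K, ⟪-v, x⟫ = ⟪-v, q⟫ → x = q := by
      intro x hx h
      rw [inner_neg_left, inner_neg_left, neg_inj] at h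
      by_contra hne
      exact huq x hx hne h
    -- a point of K different from p (and another different from q)
    have hx2K : x₀ + ε • v ∈ K := by
      apply hball
      simp [mem_closedBall, dist_eq_norm, norm_smul, hv, abs_of_nonneg hε.le]
    have hx3K : x₀ - ε • v ∈ K := by
      apply hball
      simp [mem_closedBall, dist_eq_norm, norm_smul, hv, abs_of_nonneg hε.le]
    have hx2ne : x₀ + ε • v ≠ x₀ := by
      intro h
      have : ε • v = 0 := by
        have := sub_eq_zero.2 h; rwa [add_sub_cancel_left] at this
      rcases smul_eq_zero.1 this with h' | h'
      · exact absurd h' (ne_of_gt hε)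
      · rw [h', norm_zero] at hv; norm_num at hv
    have hexp : ∃ x₁ ∈ K, x₁ ≠ p := by
      by_cases h : x₀ = p
      · exact ⟨x₀ + ε • v, hx2K, by rw [h] at hx2ne ⊢; exact hx2ne⟩
      · exact ⟨x₀, hx₀K, h⟩
    have hexq : ∃ x₁ ∈ K, x₁ ≠ q := by
      by_cases h : x₀ = q
      · exact ⟨x₀ + ε • v, hx2K, by rw [h] at hx2ne ⊢; exact hx2ne⟩
      · exact ⟨x₀, hx₀K, h⟩
    obtain ⟨y₁, hy₁K, hy₁p⟩ := hexp
    obtain ⟨y₂, hy₂K, hy₂q⟩ := hexq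
    obtain ⟨c₁, hc₁, hsharp₁⟩ := sharp hA hpK hpmax huniqp hy₁K hy₁p
    obtain ⟨c₂, hc₂, hsharp₂⟩ := sharp hA hqK hqmax huniqq hy₂K hy₂q
    -- perpendicular direction
    set e : E2 := (WithLp.equiv 2 (Fin 2 → ℝ)).symm ![-(v 1), v 0] with hedef
    have he0 : e 0 = -(v 1) := rfl
    have he1 : e 1 = v 0 := rfl
    have hv2 : v 0 ^ 2 + v 1 ^ 2 = 1 := by
      have := real_inner_self_eq_norm_sq v
      rw [hv, inner_coords] at this
      nlinarith
    have hve : ⟪v, e⟫ = 0 := by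
      rw [inner_coords, he0, he1]; ring
    have hee : ⟪e, e⟫ = 1 := by
      rw [inner_coords, he0, he1]; nlinarith
    have hne : ‖e‖ = 1 := by
      have := real_inner_self_eq_norm_sq e
      rw [hee] at this
      nlinarith [norm_nonneg e]
    -- positive width
    have hWpos : 0 < ⟪v, p⟫ - ⟪v, q⟫ := by
      have h1 := hpmax _ hx2K
      have h2 := hqmin _ hx3K
      rw [inner_add_right, real_inner_smul_right, real_inner_self_eq_norm_sq, hv] at h1
      rw [inner_sub_right, real_inner_smul_right, real_inner_self_eq_norm_sq, hv] at h2
      simp only [one_pow, mul_one] at h1 h2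
      linarith
    set W : ℝ := ⟪v, p⟫ - ⟪v, q⟫ with hWdef
    set s : ℝ := ⟪e, p⟫ - ⟪e, q⟫ with hsdef
    set σ : ℝ := if 0 ≤ s then -(min c₁ c₂) else min c₁ c₂ with hσdef
    have hminc : 0 < min c₁ c₂ := lt_min hc₁ hc₂
    have hσne : σ ≠ 0 := by
      rw [hσdef]
      split
      · exact neg_ne_zero.2 (ne_of_gt hminc)
      · exact ne_of_gt hminc
    have hσabs : |σ| = min c₁ c₂ := by
      rw [hσdef]
      split
      · rw [abs_neg, abs_of_pos hminc]
      · rw [abs_of_pos hminc]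
    have hσs : σ * s ≤ 0 := by
      rw [hσdef]
      split
      · next h => nlinarith
      · next h => push_neg at h; nlinarith
    set u : E2 := v + σ • e with hudef
    have hev : ⟪e, v⟫ = 0 := by rw [real_inner_comm]; exact hve
    have huu : ⟪u, u⟫ = 1 + σ ^ 2 := by
      rw [hudef]
      rw [inner_add_left, inner_add_right, inner_add_right, real_inner_smul_left,
        real_inner_smul_left, real_inner_smul_right, real_inner_smul_right,
        real_inner_self_eq_norm_sq, hv, hee, hve, hev]
      ring
    have hnu : 1 < ‖u‖ := by
      have h1 := real_inner_self_eq_norm_sq u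
      rw [huu] at h1
      nlinarith [norm_nonneg u, mul_self_pos.mpr hσne]
    have hnune : ‖u‖ ≠ 0 := by positivity
    set vθ : E2 := ‖u‖⁻¹ • u with hvθdef
    have hvθ : ‖vθ‖ = 1 := by
      rw [hvθdef, norm_smul, norm_inv, norm_norm, inv_mul_cancel₀ hnune]
    have hinnθ : ∀ x : E2, ⟪vθ, x⟫ = ‖u‖⁻¹ * ⟪u, x⟫ := by
      intro x
      rw [hvθdef, real_inner_smul_left]
    have huinner : ∀ x : E2, ⟪u, x⟫ = ⟪v, x⟫ + σ * ⟪e, x⟫ := by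
      intro x
      rw [hudef, inner_add_left, real_inner_smul_left]
    -- p maximizes in direction vθ
    have hmaxθ : ∀ x ∈ K, ⟪vθ, x⟫ ≤ ⟪vθ, p⟫ := by
      intro x hx
      rw [hinnθ, hinnθ]
      have hkey : ⟪u, x⟫ ≤ ⟪u, p⟫ := by
        rw [huinner, huinner]
        have h1 := hsharp₁ x hx
        have h2 : |⟪e, x - p⟫| ≤ ‖x - p‖ := by
          have := abs_real_inner_le_norm e (x - p)
          rw [hne, one_mul] at this; exact this
        have h3 : σ * ⟪e, x⟫ - σ * ⟪e, p⟫ = σ * ⟪e, x - p⟫ := by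
          rw [inner_sub_right]; ring
        have h4 : σ * ⟪e, x - p⟫ ≤ |σ| * ‖x - p‖ := by
          calc σ * ⟪e, x - p⟫ ≤ |σ * ⟪e, x - p⟫| := le_abs_self _
            _ = |σ| * |⟪e, x - p⟫| := abs_mul _ _
            _ ≤ |σ| * ‖x - p‖ := by nlinarith [abs_nonneg σ]
        have h5 : |σ| * ‖x - p‖ ≤ c₁ * ‖x - p‖ := by
          have := min_le_left c₁ c₂
          nlinarith [norm_nonneg (x - p), hσabs]
        linarith
      have : (0:ℝ) < ‖u‖⁻¹ := by positivity
      nlinarith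
    -- q minimizes in direction vθ
    have hminθ : ∀ x ∈ K, ⟪vθ, q⟫ ≤ ⟪vθ, x⟫ := by
      intro x hx
      rw [hinnθ, hinnθ]
      have hkey : ⟪u, q⟫ ≤ ⟪u, x⟫ := by
        rw [huinner, huinner]
        have h1 := hsharp₂ x hx
        rw [inner_neg_left, inner_neg_left] at h1
        have h2 : |⟪e, x - q⟫| ≤ ‖x - q‖ := by
          have := abs_real_inner_le_norm e (x - q)
          rw [hne, one_mul] at this; exact this
        have h3 : σ * ⟪e, q⟫ - σ * ⟪e, x⟫ = -(σ * ⟪e, x - q⟫) := by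
          rw [inner_sub_right]; ring
        have h4 : -(σ * ⟪e, x - q⟫) ≤ |σ| * ‖x - q‖ := by
          calc -(σ * ⟪e, x - q⟫) ≤ |σ * ⟪e, x - q⟫| := neg_le_abs _
            _ = |σ| * |⟪e, x - q⟫| := abs_mul _ _
            _ ≤ |σ| * ‖x - q‖ := by nlinarith [abs_nonneg σ]
        have h5 : |σ| * ‖x - q‖ ≤ c₂ * ‖x - q‖ := by
          have := min_le_right c₁ c₂
          nlinarith [norm_nonneg (x - q), hσabs]
        linarith
      have : (0:ℝ) < ‖u‖⁻¹ := by positivity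
      nlinarith
    have hdθ : dirWidth vθ K = ‖u‖⁻¹ * (W + σ * s) := by
      rw [dirWidth_eq_pq vθ hpK hqK hmaxθ hminθ, hinnθ, hinnθ, huinner, huinner,
        hWdef, hsdef]
      ring
    have hdv : dirWidth v K = W := dirWidth_eq_pq v hpK hqK hpmax hqmin
    have hle := hmin vθ hvθ
    rw [hdθ, hdv] at hle
    have h6 : ‖u‖ * W ≤ W + σ * s := by
      rw [← mul_le_mul_iff_right₀ (show (0:ℝ) < ‖u‖ by linarith)] at hle
      rw [← mul_assoc, mul_inv_cancel₀ hnune, one_mul] at hle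
      linarith
    nlinarith

lemma ball_subset_iff (hA : ∀ i, ‖A i‖ = 1) {t : ℝ} (ht : 0 ≤ t) (x : E2) :
    closedBall x t ⊆ {x : E2 | ∀ j, ⟪A j, x⟫ ≤ c j} ↔ ∀ j, ⟪A j, x⟫ ≤ c j - t := by
  constructor
  · intro h j
    have hx : x + t • A j ∈ closedBall x t := by
      simp [mem_closedBall, dist_eq_norm, norm_smul, hA j, abs_of_nonneg ht]
    have := h hx j
    rw [inner_add_right, real_inner_smul_right, real_inner_self_eq_norm_sq, hA j] at this
    simp only [one_pow, mul_one] at this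
    linarith
  · intro h y hy j
    have h1 : ⟪A j, y⟫ = ⟪A j, x⟫ + ⟪A j, y - x⟫ := by
      rw [← inner_add_right, add_sub_cancel]
    have h2 : ⟪A j, y - x⟫ ≤ ‖A j‖ * ‖y - x‖ := real_inner_le_norm _ _
    have h3 : ‖y - x‖ ≤ t := by rwa [mem_closedBall, dist_eq_norm] at hy
    have := h j
    rw [hA j, one_mul] at h2
    show ⟪A j, y⟫ ≤ c j
    linarith

lemma innerParallel_eq (hA : ∀ i, ‖A i‖ = 1) {t : ℝ} (ht : 0 ≤ t) :
    innerParallel {x : E2 | ∀ j, ⟪A j, x⟫ ≤ c j} t = {x : E2 | ∀ j, ⟪A j, x⟫ ≤ c j - t} := by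
  ext x
  simp only [innerParallel, Set.mem_setOf_eq, Set.mem_sep_iff]
  constructor
  · rintro ⟨-, h⟩
    exact (ball_subset_iff hA ht x).1 h
  · intro h
    refine ⟨fun j => by have := h j; linarith, (ball_subset_iff hA ht x).2 h⟩

lemma dirWidth_rounded (hA : ∀ i, ‖A i‖ = 1) {t : ℝ} (ht : 0 ≤ t) (v : E2) (hv : ‖v‖ = 1)
    {R : ℝ} (hR : ∀ x ∈ {x : E2 | ∀ j, ⟪A j, x⟫ ≤ c j}, ‖x‖ ≤ R)
    (hne : {x : E2 | ∀ j, ⟪A j, x⟫ ≤ c j - t}.Nonempty) :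
    dirWidth v (rounded {x : E2 | ∀ j, ⟪A j, x⟫ ≤ c j} t)
      = dirWidth v {x : E2 | ∀ j, ⟪A j, x⟫ ≤ c j - t} + 2 * t := by
  set P : Set E2 := {x : E2 | ∀ j, ⟪A j, x⟫ ≤ c j} with hP
  set K : Set E2 := {x : E2 | ∀ j, ⟪A j, x⟫ ≤ c j - t} with hK
  have hKP : K ⊆ P := fun x hx j => le_trans (hx j) (by linarith)
  have hRK : ∀ x ∈ K, ‖x‖ ≤ R := fun x hx => hR x (hKP hx)
  have hRrP : ∀ x ∈ rounded P t, ‖x‖ ≤ R := by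
    rintro y ⟨x, hball, hy⟩; exact hR y (hball hy)
  have hKsub : K ⊆ rounded P t := fun x hx =>
    ⟨x, (ball_subset_iff hA ht x).2 hx, by simp [mem_closedBall, ht]⟩
  have hneR : (rounded P t).Nonempty := hne.mono hKsub
  have hsup : sSup ((fun x => ⟪v, x⟫) '' rounded P t) = sSup ((fun x => ⟪v, x⟫) '' K) + t := by
    apply le_antisymm
    · apply csSup_le (hneR.image _)
      rintro w ⟨y, ⟨x, hball, hy⟩, rfl⟩
      have hxK : x ∈ K := (ball_subset_iff hA ht x).1 hball
      have h1 : ⟪v, y⟫ = ⟪v, x⟫ + ⟪v, y - x⟫ := by rw [← inner_add_right, add_sub_cancel]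
      have h2 : ⟪v, y - x⟫ ≤ ‖v‖ * ‖y - x‖ := real_inner_le_norm _ _
      have h3 : ‖y - x‖ ≤ t := by rwa [mem_closedBall, dist_eq_norm] at hy
      have h4 : ⟪v, x⟫ ≤ sSup ((fun x => ⟪v, x⟫) '' K) :=
        le_csSup (im_bddAbove v hRK) (mem_image_of_mem _ hxK)
      rw [hv, one_mul] at h2
      show ⟪v, y⟫ ≤ _
      linarith
    · rw [← le_sub_iff_add_le]
      apply csSup_le (hne.image _)
      rintro w ⟨x, hx, rfl⟩
      have hmem : x + t • v ∈ rounded P t := by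
        refine ⟨x, (ball_subset_iff hA ht x).2 hx, ?_⟩
        simp [mem_closedBall, dist_eq_norm, norm_smul, hv, abs_of_nonneg ht]
      have h5 : ⟪v, x + t • v⟫ ≤ sSup ((fun x => ⟪v, x⟫) '' rounded P t) :=
        le_csSup (im_bddAbove v hRrP) (mem_image_of_mem _ hmem)
      rw [inner_add_right, real_inner_smul_right, real_inner_self_eq_norm_sq, hv] at h5
      show ⟪v, x⟫ ≤ _ - t
      simp only [one_pow, mul_one] at h5
      linarith
  have hinf : sInf ((fun x => ⟪v, x⟫) '' rounded P t) = sInf ((fun x => ⟪v, x⟫) '' K) - t := by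
    apply le_antisymm
    · rw [le_sub_iff_add_le]
      apply le_csInf (hne.image _)
      rintro w ⟨x, hx, rfl⟩
      have hmem : x - t • v ∈ rounded P t := by
        refine ⟨x, (ball_subset_iff hA ht x).2 hx, ?_⟩
        simp [mem_closedBall, dist_eq_norm, norm_smul, hv, abs_of_nonneg ht]
      have h5 : sInf ((fun x => ⟪v, x⟫) '' rounded P t) ≤ ⟪v, x - t • v⟫ :=
        csInf_le (im_bddBelow v hRrP) (mem_image_of_mem _ hmem)
      rw [inner_sub_right, real_inner_smul_right, real_inner_self_eq_norm_sq, hv] at h5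
      show _ + t ≤ ⟪v, x⟫
      simp only [one_pow, mul_one] at h5
      linarith
    · apply le_csInf (hneR.image _)
      rintro w ⟨y, ⟨x, hball, hy⟩, rfl⟩
      have hxK : x ∈ K := (ball_subset_iff hA ht x).1 hball
      have h1 : ⟪v, y⟫ = ⟪v, x⟫ + ⟪v, y - x⟫ := by rw [← inner_add_right, add_sub_cancel]
      have h2 : -(‖v‖ * ‖y - x‖) ≤ ⟪v, y - x⟫ := by
        have := neg_abs_le (⟪v, y - x⟫ : ℝ)
        have := abs_real_inner_le_norm v (y - x)
        linarith
      have h3 : ‖y - x‖ ≤ t := by rwa [mem_closedBall, dist_eq_norm] at hy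
      have h4 : sInf ((fun x => ⟪v, x⟫) '' K) ≤ ⟪v, x⟫ :=
        csInf_le (im_bddBelow v hRK) (mem_image_of_mem _ hxK)
      rw [hv, one_mul] at h2
      show _ - t ≤ ⟪v, y⟫
      linarith
  unfold dirWidth
  rw [hsup, hinf]; ring

end RhoAux

open RhoAux in
/-- For a convex polygon `P = {x : Ax ≤ b} ⊆ ℝ²` with nonempty interior, unit-norm rows and
every row defining an edge of `P`, with `n ≥ 2`, `r = I(P)`,
`f_i(t) = width_{A_i}(interior_t P) − 2(n−1)t` and
`M_i = max {t ≥ 0 : ∃ x, Ax ≤ b − t·𝟙 and A_i·x = b_i − t}`, the unique `ρ ∈ (0,r)` with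
`width (P^ρ) = 2nρ` equals `min {t ∈ (0,r) : ∃ i, f_i(t) = 0 and f_i(min(M_i, r)) ≤ 0}`. -/
theorem rho_eq_min_filtered_root {m : ℕ}
    (A : Fin m → EuclideanSpace ℝ (Fin 2)) (b : Fin m → ℝ)
    (hA : ∀ i, ‖A i‖ = 1)
    (hbdd : Bornology.IsBounded {x | ∀ i, ⟪A i, x⟫ ≤ b i})
    (hint : (interior {x | ∀ i, ⟪A i, x⟫ ≤ b i}).Nonempty)
    (hedge : ∀ i, Module.finrank ℝ
      (vectorSpan ℝ {x ∈ {x | ∀ j, ⟪A j, x⟫ ≤ b j} | ⟪A i, x⟫ = b i}) = 1)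
    (n : ℕ) (hn : 2 ≤ n)
    (M : Fin m → ℝ)
    (hM : ∀ i, IsGreatest
      {t : ℝ | 0 ≤ t ∧ ∃ x, (∀ j, ⟪A j, x⟫ ≤ b j - t) ∧ ⟪A i, x⟫ = b i - t} (M i))
    (ρ : ℝ) (hρ₀ : 0 < ρ) (hρr : ρ < inradius {x | ∀ j, ⟪A j, x⟫ ≤ b j})
    (hρ : setWidth (rounded {x | ∀ j, ⟪A j, x⟫ ≤ b j} ρ) = 2 * n * ρ) :
    IsLeast
      {t : ℝ | 0 < t ∧ t < inradius {x | ∀ j, ⟪A j, x⟫ ≤ b j} ∧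
        ∃ i : Fin m,
          dirWidth (A i) (innerParallel {x | ∀ j, ⟪A j, x⟫ ≤ b j} t)
              - 2 * ((n : ℝ) - 1) * t = 0 ∧
          dirWidth (A i) (innerParallel {x | ∀ j, ⟪A j, x⟫ ≤ b j}
                (min (M i) (inradius {x | ∀ j, ⟪A j, x⟫ ≤ b j})))
              - 2 * ((n : ℝ) - 1) * min (M i) (inradius {x | ∀ j, ⟪A j, x⟫ ≤ b j}) ≤ 0}
      ρ := by
  classical
  obtain ⟨R, hR'⟩ := isBounded_iff_forall_norm_le.1 hbdd
  have hR : ∀ x ∈ {x : E2 | ∀ j, ⟪A j, x⟫ ≤ b j}, ‖x‖ ≤ R := hR'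
  have hn2 : (2:ℝ) ≤ (n:ℝ) := by exact_mod_cast hn
  have hn1 : (1:ℝ) ≤ (n:ℝ) - 1 := by linarith
  -- a ball of radius strictly bigger than ρ inside P
  have hsetne : {s : ℝ | ∃ x : E2, closedBall x s ⊆ {x : E2 | ∀ j, ⟪A j, x⟫ ≤ b j}}.Nonempty := by
    refine ⟨-1, 0, ?_⟩
    rw [Metric.closedBall_eq_empty.2 (by norm_num : (-1:ℝ) < 0)]
    exact empty_subset _
  obtain ⟨r', ⟨x₀, hx₀⟩, hρr'⟩ := exists_lt_of_lt_csSup hsetne hρr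
  have hε : 0 < r' - ρ := by linarith
  have hballK : closedBall x₀ (r' - ρ) ⊆ {x : E2 | ∀ j, ⟪A j, x⟫ ≤ b j - ρ} := by
    intro y hy
    apply (ball_subset_iff hA hρ₀.le y).1
    intro z hz
    apply hx₀
    rw [mem_closedBall] at hz hy ⊢
    have := dist_triangle z y x₀
    linarith
  have hx₀K : x₀ ∈ {x : E2 | ∀ j, ⟪A j, x⟫ ≤ b j - ρ} := hballK (mem_closedBall_self hε.le)
  have hKρne : {x : E2 | ∀ j, ⟪A j, x⟫ ≤ b j - ρ}.Nonempty := ⟨x₀, hx₀K⟩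
  have hRK : ∀ t : ℝ, 0 ≤ t → ∀ x ∈ {x : E2 | ∀ j, ⟪A j, x⟫ ≤ b j - t}, ‖x‖ ≤ R :=
    fun t ht x hx => hR x (fun j => le_trans (hx j) (by linarith))
  have hRr : ∀ t : ℝ, ∀ x ∈ rounded {x : E2 | ∀ j, ⟪A j, x⟫ ≤ b j} t, ‖x‖ ≤ R := by
    rintro t y ⟨x, hb, hy⟩; exact hR y (hb hy)
  have hrne : (rounded {x : E2 | ∀ j, ⟪A j, x⟫ ≤ b j} ρ).Nonempty :=
    ⟨x₀, x₀, (ball_subset_iff hA hρ₀.le x₀).2 hx₀K, mem_closedBall_self hρ₀.le⟩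
  -- the set of directional widths of the inner body
  have hSlb : ∀ w ∈ {w | ∃ v : E2, ‖v‖ = 1 ∧
      w = dirWidth v {x : E2 | ∀ j, ⟪A j, x⟫ ≤ b j - ρ}}, 0 ≤ w := by
    rintro w ⟨v, hv, rfl⟩
    exact dirWidth_nonneg v hKρne (hRK ρ hρ₀.le)
  have hS'lb : ∀ w ∈ {w | ∃ v : E2, ‖v‖ = 1 ∧
      w = dirWidth v (rounded {x : E2 | ∀ j, ⟪A j, x⟫ ≤ b j} ρ)}, 0 ≤ w := by
    rintro w ⟨v, hv, rfl⟩
    exact dirWidth_nonneg v hrne (hRr ρ)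
  obtain ⟨v₀, hv₀s⟩ := (NormedSpace.sphere_nonempty (x := (0:E2)) (r := 1)).2 zero_le_one
  have hv₀ : ‖v₀‖ = 1 := mem_sphere_zero_iff_norm.1 hv₀s
  have hSne : {w | ∃ v : E2, ‖v‖ = 1 ∧
      w = dirWidth v {x : E2 | ∀ j, ⟪A j, x⟫ ≤ b j - ρ}}.Nonempty := ⟨_, v₀, hv₀, rfl⟩
  have hS'ne : {w | ∃ v : E2, ‖v‖ = 1 ∧
      w = dirWidth v (rounded {x : E2 | ∀ j, ⟪A j, x⟫ ≤ b j} ρ)}.Nonempty := ⟨_, v₀, hv₀, rfl⟩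
  -- setWidth of the rounded body decomposes
  have hS'eq : setWidth (rounded {x : E2 | ∀ j, ⟪A j, x⟫ ≤ b j} ρ)
      = sInf {w | ∃ v : E2, ‖v‖ = 1 ∧
          w = dirWidth v {x : E2 | ∀ j, ⟪A j, x⟫ ≤ b j - ρ}} + 2 * ρ := by
    unfold setWidth
    apply le_antisymm
    · rw [← sub_le_iff_le_add]
      apply le_csInf hSne
      rintro w ⟨v, hv, rfl⟩
      rw [sub_le_iff_le_add]
      have hmem : dirWidth v (rounded {x : E2 | ∀ j, ⟪A j, x⟫ ≤ b j} ρ)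
          ∈ {w | ∃ v : E2, ‖v‖ = 1 ∧
            w = dirWidth v (rounded {x : E2 | ∀ j, ⟪A j, x⟫ ≤ b j} ρ)} := ⟨v, hv, rfl⟩
      have h1 := csInf_le ⟨0, hS'lb⟩ hmem
      rw [dirWidth_rounded hA hρ₀.le v hv hR hKρne] at h1
      linarith
    · apply le_csInf hS'ne
      rintro w ⟨v, hv, rfl⟩
      rw [dirWidth_rounded hA hρ₀.le v hv hR hKρne]
      have h1 := csInf_le ⟨0, hSlb⟩ (⟨v, hv, rfl⟩ : dirWidth v {x : E2 | ∀ j, ⟪A j, x⟫ ≤ b j - ρ}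
        ∈ {w | ∃ v : E2, ‖v‖ = 1 ∧ w = dirWidth v {x : E2 | ∀ j, ⟪A j, x⟫ ≤ b j - ρ}})
      linarith
  have hWρ : sInf {w | ∃ v : E2, ‖v‖ = 1 ∧
      w = dirWidth v {x : E2 | ∀ j, ⟪A j, x⟫ ≤ b j - ρ}} = 2 * (n:ℝ) * ρ - 2 * ρ := by
    rw [hS'eq] at hρ
    linarith
  -- the key lemma: width attained at an active constraint normal
  obtain ⟨i, z, hzK, hact, hmini⟩ := keyWidth (c := fun j => b j - ρ) hA
    (hRK ρ hρ₀.le) hε hballK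
  have hdir_eq : dirWidth (A i) {x : E2 | ∀ j, ⟪A j, x⟫ ≤ b j - ρ}
      = sInf {w | ∃ v : E2, ‖v‖ = 1 ∧
          w = dirWidth v {x : E2 | ∀ j, ⟪A j, x⟫ ≤ b j - ρ}} := by
    symm
    apply IsLeast.csInf_eq
    exact ⟨⟨A i, hA i, rfl⟩, by rintro w ⟨v, hv, rfl⟩; exact hmini v hv⟩
  have hMge : ρ ≤ M i := (hM i).2 ⟨hρ₀.le, z, hzK, hact⟩
  constructor
  · refine ⟨hρ₀, hρr, i, ?_, ?_⟩
    · rw [innerParallel_eq hA hρ₀.le, hdir_eq, hWρ]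
      ring
    · have ht'ρ : ρ ≤ min (M i) (inradius {x : E2 | ∀ j, ⟪A j, x⟫ ≤ b j}) :=
        le_min hMge hρr.le
      have ht'0 : 0 ≤ min (M i) (inradius {x : E2 | ∀ j, ⟪A j, x⟫ ≤ b j}) :=
        le_trans hρ₀.le ht'ρ
      rw [innerParallel_eq hA ht'0]
      set t' := min (M i) (inradius {x : E2 | ∀ j, ⟪A j, x⟫ ≤ b j}) with ht'def
      by_cases hKs : {x : E2 | ∀ j, ⟪A j, x⟫ ≤ b j - t'}.Nonempty
      · have hsub : {x : E2 | ∀ j, ⟪A j, x⟫ ≤ b j - t'}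
            ⊆ {x : E2 | ∀ j, ⟪A j, x⟫ ≤ b j - ρ} :=
          fun x hx j => le_trans (hx j) (by linarith)
        have h1 := dirWidth_mono (A i) hsub hKs (hRK ρ hρ₀.le)
        have h2 : dirWidth (A i) {x : E2 | ∀ j, ⟪A j, x⟫ ≤ b j - ρ}
            = 2 * (n:ℝ) * ρ - 2 * ρ := by rw [hdir_eq, hWρ]
        nlinarith
      · rw [Set.not_nonempty_iff_eq_empty.1 hKs]
        unfold dirWidth
        rw [Set.image_empty, Real.sSup_empty, Real.sInf_empty]
        nlinarith
  · rintro t ⟨ht0, htr, i', hf, -⟩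
    by_contra hlt
    push_neg at hlt
    rw [innerParallel_eq hA ht0.le] at hf
    have hKtne : {x : E2 | ∀ j, ⟪A j, x⟫ ≤ b j - t}.Nonempty :=
      ⟨x₀, fun j => le_trans (hx₀K j) (by linarith)⟩
    have h1 : setWidth (rounded {x : E2 | ∀ j, ⟪A j, x⟫ ≤ b j} ρ)
        ≤ dirWidth (A i') (rounded {x : E2 | ∀ j, ⟪A j, x⟫ ≤ b j} ρ) :=
      csInf_le ⟨0, hS'lb⟩ ⟨A i', hA i', rfl⟩
    have hsub : rounded {x : E2 | ∀ j, ⟪A j, x⟫ ≤ b j} ρ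
        ⊆ rounded {x : E2 | ∀ j, ⟪A j, x⟫ ≤ b j} t := by
      rintro y ⟨x, hb, hy⟩
      have hfr0 : 0 ≤ (ρ - t)/ρ := div_nonneg (by linarith) hρ₀.le
      have hyx : ‖y - x‖ ≤ ρ := by rwa [mem_closedBall, dist_eq_norm] at hy
      refine ⟨x + ((ρ - t)/ρ) • (y - x), ?_, ?_⟩
      · intro w hw
        apply hb
        rw [mem_closedBall] at hw ⊢
        have hdxx : dist (x + ((ρ - t)/ρ) • (y - x)) x ≤ ρ - t := by
          rw [dist_eq_norm, add_sub_cancel_left, norm_smul, Real.norm_eq_abs,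
            abs_of_nonneg hfr0]
          calc (ρ - t)/ρ * ‖y - x‖ ≤ (ρ - t)/ρ * ρ := by nlinarith [norm_nonneg (y - x)]
            _ = ρ - t := by field_simp
        have := dist_triangle w (x + ((ρ - t)/ρ) • (y - x)) x
        linarith
      · rw [mem_closedBall, dist_eq_norm]
        have heq : y - (x + ((ρ - t)/ρ) • (y - x)) = (t/ρ) • (y - x) := by
          have hco : t/ρ = 1 - (ρ - t)/ρ := by field_simp; ring
          rw [hco, sub_smul, one_smul]
          abel
        rw [heq, norm_smul, Real.norm_eq_abs,
          abs_of_nonneg (div_nonneg ht0.le hρ₀.le)]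
        calc t/ρ * ‖y - x‖ ≤ t/ρ * ρ := by
              have : 0 ≤ t/ρ := div_nonneg ht0.le hρ₀.le
              nlinarith [norm_nonneg (y - x)]
          _ = t := by field_simp
    have h2 : dirWidth (A i') (rounded {x : E2 | ∀ j, ⟪A j, x⟫ ≤ b j} ρ)
        ≤ dirWidth (A i') (rounded {x : E2 | ∀ j, ⟪A j, x⟫ ≤ b j} t) :=
      dirWidth_mono _ hsub hrne (hRr t)
    have h3 : dirWidth (A i') (rounded {x : E2 | ∀ j, ⟪A j, x⟫ ≤ b j} t)
        = dirWidth (A i') {x : E2 | ∀ j, ⟪A j, x⟫ ≤ b j - t} + 2 * t :=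
      dirWidth_rounded hA ht0.le _ (hA i') hR hKtne
    rw [hρ] at h1
    nlinarith
end
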